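/- arXiv:1003.0588 — 7 statements merged into one kernel-verified Lean document; each statement's English description precedes it below -/
import Mathlib

section
/- Let T be a Turing machine and suppose there exists N ∈ ℕ bounding uniformly the head positions: for every configuration x with head at position 0, all head positions along the orbit of x lie in [-N, N]. Then T is globally preperiodic: there exist q ≥ 0 and p > 0 such that T^{q+p} = T^q on all of X. -/
/-- A Turing machine with tape alphabet `A`, state set `Q`, and rule
`δ : A × Q → A × Q × {-1,1}` (the direction is encoded by a `Bool`). -/
structure TuringMachine (A Q : Type*) where
  δ : A → Q → A × Q × Bool

namespace TuringMachine

variable {A Q : Type*}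

/-- Direction of a move: `true ↦ +1`, `false ↦ -1`. -/
def dir (b : Bool) : ℤ := if b then 1 else -1

/-- A configuration: tape contents, head state, head position. -/
abbrev Config (A Q : Type*) := (ℤ → A) × Q × ℤ

/-- One step of the machine on `X = A^ℤ × Q × ℤ`. -/
def step (M : TuringMachine A Q) (c : Config A Q) : Config A Q :=
  let r := M.δ (c.1 c.2.2) c.2.1
  (Function.update c.1 c.2.2 r.1, r.2.1, c.2.2 + dir r.2.2)

/-- Head position after `t` steps. -/
def pos (M : TuringMachine A Q) (t : ℕ) (c : Config A Q) : ℤ :=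
  ((M.step)^[t] c).2.2

/-- `c` is preperiodic for the machine. -/
def Preperiodic (M : TuringMachine A Q) (c : Config A Q) : Prop :=
  ∃ m p : ℕ, 0 < p ∧ (M.step)^[m + p] c = (M.step)^[m] c

end TuringMachine



namespace TMaux

variable {A Q : Type*}

/-- Shift a configuration by `k`. -/
def shiftC (k : ℤ) (c : TuringMachine.Config A Q) : TuringMachine.Config A Q :=
  (fun i => c.1 (i + k), c.2.1, c.2.2 - k)

lemma shiftC_neg_shiftC (k : ℤ) (c : TuringMachine.Config A Q) :
    shiftC (-k) (shiftC k c) = c := by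
  obtain ⟨τ, s, h⟩ := c
  simp only [shiftC]
  refine Prod.ext ?_ (Prod.ext rfl ?_)
  · funext i; simp
  · simp

lemma step_shiftC (M : TuringMachine A Q) (k : ℤ) (c : TuringMachine.Config A Q) :
    M.step (shiftC k c) = shiftC k (M.step c) := by
  obtain ⟨τ, s, h⟩ := c
  simp only [TuringMachine.step, shiftC, sub_add_cancel]
  refine Prod.ext ?_ (Prod.ext rfl (by ring))
  funext i
  simp only [Function.update_apply]
  by_cases hi : i = h - k
  · subst hi; simp [sub_add_cancel]
  · have : i + k ≠ h := fun e => hi (by omega)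
    simp [hi, this]

lemma iterate_step_shiftC (M : TuringMachine A Q) (k : ℤ) (t : ℕ)
    (c : TuringMachine.Config A Q) :
    (M.step)^[t] (shiftC k c) = shiftC k ((M.step)^[t] c) := by
  induction t with
  | zero => rfl
  | succ t ih => rw [Function.iterate_succ_apply', Function.iterate_succ_apply', ih,
      step_shiftC]

/-- Tape outside the visited window never changes. -/
lemma tape_outside (M : TuringMachine A Q) (N : ℕ) (x : TuringMachine.Config A Q)
    (hx : ∀ t : ℕ, ((M.step)^[t] x).2.2 ∈ Set.Icc (-(N : ℤ)) N)
    (t : ℕ) (i : ℤ) (hi : i ∉ Set.Icc (-(N : ℤ)) (N : ℤ)) :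
    ((M.step)^[t] x).1 i = x.1 i := by
  induction t with
  | zero => rfl
  | succ t ih =>
    rw [Function.iterate_succ_apply']
    have hne : i ≠ ((M.step)^[t] x).2.2 := fun e => hi (e ▸ hx t)
    simpa [TuringMachine.step, Function.update_apply, hne] using ih

/-- Two configurations with head at matching positions agreeing on the window
keep agreeing (state, position, window tape) along the orbit. -/
lemma agree (M : TuringMachine A Q) (N : ℕ) (x y : TuringMachine.Config A Q)
    (hx : ∀ t : ℕ, ((M.step)^[t] x).2.2 ∈ Set.Icc (-(N : ℤ)) N)
    (hs : x.2.1 = y.2.1) (hp : x.2.2 = y.2.2)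
    (htape : ∀ i ∈ Set.Icc (-(N : ℤ)) (N : ℤ), x.1 i = y.1 i) (t : ℕ) :
    ((M.step)^[t] x).2.1 = ((M.step)^[t] y).2.1 ∧
    ((M.step)^[t] x).2.2 = ((M.step)^[t] y).2.2 ∧
    ∀ i ∈ Set.Icc (-(N : ℤ)) (N : ℤ), ((M.step)^[t] x).1 i = ((M.step)^[t] y).1 i := by
  induction t with
  | zero => exact ⟨hs, hp, htape⟩
  | succ t ih =>
    obtain ⟨ihs, ihp, iht⟩ := ih
    have hposx := hx t
    have hread : ((M.step)^[t] x).1 ((M.step)^[t] x).2.2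
        = ((M.step)^[t] y).1 ((M.step)^[t] y).2.2 := by
      rw [← ihp]; exact iht _ hposx
    have hδ : M.δ (((M.step)^[t] x).1 ((M.step)^[t] x).2.2) ((M.step)^[t] x).2.1
        = M.δ (((M.step)^[t] y).1 ((M.step)^[t] y).2.2) ((M.step)^[t] y).2.1 := by
      rw [hread, ihs]
    rw [Function.iterate_succ_apply', Function.iterate_succ_apply']
    refine ⟨?_, ?_, ?_⟩
    · simp only [TuringMachine.step]; rw [hδ]
    · simp only [TuringMachine.step]; rw [hδ, ihp]
    · intro i hi
      simp only [TuringMachine.step]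
      rw [hδ, ← ihp]
      simp only [Function.update_apply]
      by_cases hie : i = ((M.step)^[t] x).2.2
      · simp [hie]
      · simp [hie, iht i hi]

def clamp (N : ℕ) (z : ℤ) : Fin (2 * N + 1) :=
  ⟨(z + N).toNat % (2 * N + 1), Nat.mod_lt _ (by omega)⟩

lemma clamp_inj (N : ℕ) {z w : ℤ} (hz : z ∈ Set.Icc (-(N : ℤ)) N)
    (hw : w ∈ Set.Icc (-(N : ℤ)) N) (h : clamp N z = clamp N w) : z = w := by
  simp only [Set.mem_Icc] at hz hw
  have := congrArg Fin.val h
  simp only [clamp] at this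
  rw [Nat.mod_eq_of_lt (by omega), Nat.mod_eq_of_lt (by omega)] at this
  omega

end TMaux

/-- If the head positions are uniformly bounded (for every configuration with
head initially at $0$, the orbit keeps the head in $[-N,N]$), then the machine is
globally preperiodic: $T^{q+p} = T^q$ on all of $X$. -/
theorem globally_preperiodic_of_uniformly_bounded_head
    {A Q : Type*} [Fintype A] [Fintype Q]
    (M : TuringMachine A Q) (N : ℕ)
    (hbd : ∀ x : TuringMachine.Config A Q, x.2.2 = 0 →
      ∀ t : ℕ, M.pos t x ∈ Set.Icc (-(N : ℤ)) N) :
    ∃ q p : ℕ, 0 < p ∧ ∀ x : TuringMachine.Config A Q,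
      (M.step)^[q + p] x = (M.step)^[q] x := by
  classical
  rcases isEmpty_or_nonempty A with hA | hA
  · exact ⟨0, 1, one_pos, fun x => isEmptyElim (x.1 0)⟩
  obtain ⟨a₀⟩ := hA
  set W := Set.Icc (-(N : ℤ)) (N : ℤ) with hW
  have hbd' : ∀ x : TuringMachine.Config A Q, x.2.2 = 0 →
      ∀ t : ℕ, ((M.step)^[t] x).2.2 ∈ W := fun x hx t => hbd x hx t
  let decode : ((W → A) × Q) → TuringMachine.Config A Q := fun ℓ =>
    (fun i => if h : i ∈ W then ℓ.1 ⟨i, h⟩ else a₀, ℓ.2, 0)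
  let F : ℕ → (((W → A) × Q) → (W → A) × Q × Fin (2 * N + 1)) := fun t ℓ =>
    ((fun i => ((M.step)^[t] (decode ℓ)).1 i), ((M.step)^[t] (decode ℓ)).2.1,
      TMaux.clamp N ((M.step)^[t] (decode ℓ)).2.2)
  haveI : Finite ↥W := (Set.finite_Icc _ _).to_subtype
  obtain ⟨a, b, hab, hFab⟩ := Finite.exists_ne_map_eq_of_infinite F
  obtain ⟨q, q', hlt, hF⟩ : ∃ q q', q < q' ∧ F q = F q' := by
    rcases lt_or_gt_of_ne hab with h | h
    exacts [⟨a, b, h, hFab⟩, ⟨b, a, h, hFab.symm⟩]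
  refine ⟨q, q' - q, by omega, ?_⟩
  have hqp : q + (q' - q) = q' := by omega
  rw [hqp]
  have key : ∀ x : TuringMachine.Config A Q, x.2.2 = 0 →
      (M.step)^[q'] x = (M.step)^[q] x := by
    intro x hx0
    have hbx : ∀ t, ((M.step)^[t] x).2.2 ∈ W := hbd' x hx0
    set ℓ : (W → A) × Q := ((fun i => x.1 i.1), x.2.1) with hℓ
    have hd0 : (decode ℓ).2.2 = 0 := rfl
    have hbD : ∀ t, ((M.step)^[t] (decode ℓ)).2.2 ∈ W := hbd' _ hd0
    have hag : ∀ t, ((M.step)^[t] x).2.1 = ((M.step)^[t] (decode ℓ)).2.1 ∧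
        ((M.step)^[t] x).2.2 = ((M.step)^[t] (decode ℓ)).2.2 ∧
        ∀ i ∈ W, ((M.step)^[t] x).1 i = ((M.step)^[t] (decode ℓ)).1 i := by
      intro t
      refine TMaux.agree M N x (decode ℓ) hbx rfl (by rw [hx0]) ?_ t
      intro i hi
      simp [decode, hℓ, show i ∈ W from hi]
    have hFℓ := congrFun hF ℓ
    simp only [F, Prod.mk.injEq] at hFℓ
    obtain ⟨htape, hstate, hclamp⟩ := hFℓ
    have hpos : ((M.step)^[q] (decode ℓ)).2.2 = ((M.step)^[q'] (decode ℓ)).2.2 :=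
      TMaux.clamp_inj N (hbD q) (hbD q') hclamp
    obtain ⟨hs1, hp1, ht1⟩ := hag q'
    obtain ⟨hs2, hp2, ht2⟩ := hag q
    refine Prod.ext ?_ (Prod.ext ?_ ?_)
    · funext i
      by_cases hi : i ∈ W
      · rw [ht1 i hi, ht2 i hi]
        exact (congrFun htape ⟨i, hi⟩).symm
      · rw [TMaux.tape_outside M N x hbx q' i hi, TMaux.tape_outside M N x hbx q i hi]
    · rw [hs1, hs2, ← hstate]
    · rw [hp1, hp2, ← hpos]
  intro x
  have h0 : (TMaux.shiftC x.2.2 x).2.2 = 0 := by simp [TMaux.shiftC]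
  have hk := key (TMaux.shiftC x.2.2 x) h0
  calc (M.step)^[q'] x
      = (M.step)^[q'] (TMaux.shiftC (-(x.2.2)) (TMaux.shiftC x.2.2 x)) := by
        rw [TMaux.shiftC_neg_shiftC]
    _ = TMaux.shiftC (-(x.2.2)) ((M.step)^[q'] (TMaux.shiftC x.2.2 x)) :=
        TMaux.iterate_step_shiftC M _ _ _
    _ = TMaux.shiftC (-(x.2.2)) ((M.step)^[q] (TMaux.shiftC x.2.2 x)) := by rw [hk]
    _ = (M.step)^[q] x := by rw [← TMaux.iterate_step_shiftC, TMaux.shiftC_neg_shiftC]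
end

section
/- Let T be a Turing machine and x a configuration whose head position is bounded along its orbit. Then the trace word τ_T(Ψ(x)) ∈ (Q × A)^ℕ — the sequence of pairs (state, read symbol) at each time step — is preperiodic as a one-sided infinite word (i.e., eventually periodic). -/
/-- The trace word of a configuration: at each time, the symbol under the head
and the current state. -/
def TuringMachine.trace {A Q : Type*} (M : TuringMachine A Q)
    (x : TuringMachine.Config A Q) (t : ℕ) : A × Q :=
  let c := (M.step)^[t] x
  (c.1 c.2.2, c.2.1)

/-- If the head position along the orbit of $x$ is bounded, then the trace word
is eventually periodic. -/
theorem trace_eventually_periodic_of_bounded_head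
    {A Q : Type*} [Fintype A] [Fintype Q]
    (M : TuringMachine A Q) (x : TuringMachine.Config A Q)
    (hbd : Set.Finite {i : ℤ | ∃ t : ℕ, M.pos t x = i}) :
    ∃ m p : ℕ, 0 < p ∧ ∀ t : ℕ, m ≤ t → M.trace x (t + p) = M.trace x t := by
  classical
  set V : Set ℤ := {i : ℤ | ∃ t : ℕ, M.pos t x = i} with hVdef
  have hmemV : ∀ t : ℕ, ((M.step)^[t] x).2.2 ∈ V := fun t => ⟨t, rfl⟩
  haveI : Finite ↥V := hbd
  -- key propagation lemma
  have key : ∀ s s' : ℕ,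
      (∀ i ∈ V, ((M.step)^[s] x).1 i = ((M.step)^[s'] x).1 i) →
      ((M.step)^[s] x).2 = ((M.step)^[s'] x).2 →
      (∀ i ∈ V, ((M.step)^[s+1] x).1 i = ((M.step)^[s'+1] x).1 i) ∧
      ((M.step)^[s+1] x).2 = ((M.step)^[s'+1] x).2 := by
    intro s s' htape hqp
    have hpos : ((M.step)^[s] x).2.2 = ((M.step)^[s'] x).2.2 := by
      rw [hqp]
    have hq : ((M.step)^[s] x).2.1 = ((M.step)^[s'] x).2.1 := by
      rw [hqp]
    have hsym : ((M.step)^[s] x).1 ((M.step)^[s] x).2.2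
        = ((M.step)^[s'] x).1 ((M.step)^[s'] x).2.2 := by
      rw [hpos]; exact htape _ (hpos ▸ hmemV s)
    have hr : M.δ (((M.step)^[s] x).1 ((M.step)^[s] x).2.2) ((M.step)^[s] x).2.1
        = M.δ (((M.step)^[s'] x).1 ((M.step)^[s'] x).2.2) ((M.step)^[s'] x).2.1 := by
      rw [hsym, hq]
    rw [Function.iterate_succ_apply', Function.iterate_succ_apply']
    constructor
    · intro i hi
      simp only [TuringMachine.step, Function.update]
      rw [hr, hpos]
      split
      · rfl
      · exact htape i hi
    · simp only [TuringMachine.step]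
      rw [hr, hpos]
  -- pigeonhole
  let F : ℕ → (↥V → A) × Q × ↥V := fun t =>
    (fun i => ((M.step)^[t] x).1 i, ((M.step)^[t] x).2.1, ⟨((M.step)^[t] x).2.2, hmemV t⟩)
  obtain ⟨a, b, hab, hFab⟩ := Finite.exists_ne_map_eq_of_infinite F
  wlog hlt : a < b generalizing a b
  · exact this b a hab.symm hFab.symm (by omega)
  obtain ⟨htape0, hq0, hp0⟩ : (fun i : ↥V => ((M.step)^[a] x).1 i) =
      (fun i : ↥V => ((M.step)^[b] x).1 i) ∧
      ((M.step)^[a] x).2.1 = ((M.step)^[b] x).2.1 ∧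
      (⟨((M.step)^[a] x).2.2, hmemV a⟩ : ↥V) = ⟨((M.step)^[b] x).2.2, hmemV b⟩ := by
    simpa [F, Prod.ext_iff] using hFab
  have hstate0 : ((M.step)^[a] x).2 = ((M.step)^[b] x).2 :=
    Prod.ext hq0 (congrArg Subtype.val hp0)
  have ind : ∀ t : ℕ,
      (∀ i ∈ V, ((M.step)^[a+t] x).1 i = ((M.step)^[b+t] x).1 i) ∧
      ((M.step)^[a+t] x).2 = ((M.step)^[b+t] x).2 := by
    intro t
    induction t with
    | zero =>
      refine ⟨fun i hi => ?_, by simpa using hstate0⟩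
      simpa using congrFun htape0 ⟨i, hi⟩
    | succ n ih =>
      have := key (a+n) (b+n) ih.1 ih.2
      exact this
  refine ⟨a, b - a, by omega, fun t ht => ?_⟩
  obtain ⟨s, rfl⟩ : ∃ s, t = a + s := ⟨t - a, by omega⟩
  have h1 := ind s
  have heq : a + s + (b - a) = b + s := by omega
  unfold TuringMachine.trace
  rw [heq]
  have hpos : ((M.step)^[b+s] x).2.2 = ((M.step)^[a+s] x).2.2 := by rw [h1.2]
  have hq : ((M.step)^[b+s] x).2.1 = ((M.step)^[a+s] x).2.1 := by rw [h1.2]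
  simp only []
  rw [hpos, hq, h1.1 _ (hmemV (a+s))]
end

section
/- Every context-free language over a one-letter (unary) alphabet is regular. -/
namespace UnaryCF
open ContextFreeGrammar

variable (g : ContextFreeGrammar Unit)

/-- Tree-style derivation of a unary word of length `n` from a symbol string, with size `k`. -/
inductive Der : List (Symbol Unit g.NT) → ℕ → ℕ → Prop
  | nil : Der [] 0 0
  | term {rest : List (Symbol Unit g.NT)} {n k : ℕ} (t : Unit) :
      Der rest n k → Der (Symbol.terminal t :: rest) (n + 1) k
  | nonterm {rest : List (Symbol Unit g.NT)} {n k m j : ℕ} {r : ContextFreeRule Unit g.NT}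
      (hr : r ∈ g.rules) :
      Der r.output m j → Der rest n k →
      Der (Symbol.nonterminal r.input :: rest) (m + n) (j + k + 1)

def Der1 (A : g.NT) (n : ℕ) : Prop := ∃ j, Der g [Symbol.nonterminal A] n j

def Emb (B A : g.NT) (d : ℕ) : Prop := ∀ x, Der1 g B x → Der1 g A (x + d)

variable {g}

lemma Der.join {x y : List (Symbol Unit g.NT)} {n1 k1 n2 k2 : ℕ}
    (h1 : Der g x n1 k1) (h2 : Der g y n2 k2) : Der g (x ++ y) (n1 + n2) (k1 + k2) := by
  induction h1 with
  | nil => simpa using h2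
  | term t _ ih => simpa [Nat.add_right_comm] using Der.term t ih
  | @nonterm rest n k m j r hr hout hrest ihout ihrest =>
      have h := Der.nonterm hr hout ihrest
      have e1 : m + n + n2 = m + (n + n2) := by omega
      have e2 : j + k + 1 + k2 = j + (k + k2) + 1 := by omega
      rw [List.cons_append, e1, e2]
      exact h

lemma Der.nil_inv {n k : ℕ} (h : Der g [] n k) : n = 0 ∧ k = 0 := by
  cases h; exact ⟨rfl, rfl⟩

lemma Der.cons_term_inv {t : Unit} {rest : List (Symbol Unit g.NT)} {n k : ℕ}
    (h : Der g (Symbol.terminal t :: rest) n k) :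
    ∃ n', n = n' + 1 ∧ Der g rest n' k := by
  cases h with
  | term t h => exact ⟨_, rfl, h⟩

lemma Der.cons_nonterm_inv {A : g.NT} {rest : List (Symbol Unit g.NT)} {n k : ℕ}
    (h : Der g (Symbol.nonterminal A :: rest) n k) :
    ∃ r ∈ g.rules, r.input = A ∧ ∃ m j n2 k2, Der g r.output m j ∧ Der g rest n2 k2 ∧
      n = m + n2 ∧ k = j + k2 + 1 := by
  cases h with
  | nonterm hr hout hrest => exact ⟨_, hr, rfl, _, _, _, _, hout, hrest, rfl, rfl⟩

lemma Der.split {x y : List (Symbol Unit g.NT)} {n k : ℕ} (h : Der g (x ++ y) n k) :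
    ∃ n1 k1 n2 k2, n = n1 + n2 ∧ k = k1 + k2 ∧ Der g x n1 k1 ∧ Der g y n2 k2 := by
  induction x generalizing n k with
  | nil => exact ⟨0, 0, n, k, by omega, by omega, Der.nil, by simpa using h⟩
  | cons s x' ih =>
      rw [List.cons_append] at h
      match s, h with
      | Symbol.terminal t, h =>
          obtain ⟨n', rfl, h'⟩ := h.cons_term_inv
          obtain ⟨n1, k1, n2, k2, rfl, rfl, hx, hy⟩ := ih h'
          exact ⟨n1 + 1, k1, n2, k2, by omega, rfl, Der.term t hx, hy⟩
      | Symbol.nonterminal A, h =>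
          obtain ⟨r, hr, hA, m, j, n2, k2, hout, hrest, rfl, rfl⟩ := h.cons_nonterm_inv
          obtain ⟨a1, b1, a2, b2, rfl, rfl, hx, hy⟩ := ih hrest
          refine ⟨m + a1, j + b1 + 1, a2, b2, by omega, by omega, ?_, hy⟩
          subst hA
          exact Der.nonterm hr hout hx

lemma Der1.of_der {A : g.NT} {n j : ℕ} (h : Der g [Symbol.nonterminal A] n j) :
    Der1 g A n := ⟨j, h⟩

lemma Der1_inv {A : g.NT} {n j : ℕ} (h : Der g [Symbol.nonterminal A] n j) :
    ∃ r ∈ g.rules, r.input = A ∧ ∃ j', Der g r.output n j' ∧ j = j' + 1 := by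
  obtain ⟨r, hr, hA, m, j1, n2, k2, hout, hrest, rfl, rfl⟩ := h.cons_nonterm_inv
  obtain ⟨rfl, rfl⟩ := hrest.nil_inv
  exact ⟨r, hr, hA, j1, by simpa using hout, by omega⟩

/-- wrap a rule-output derivation into a single-nonterminal derivation -/
lemma Der.wrap {r : ContextFreeRule Unit g.NT} (hr : r ∈ g.rules) {m j : ℕ}
    (h : Der g r.output m j) : Der g [Symbol.nonterminal r.input] m (j + 1) := by
  have := Der.nonterm hr h Der.nil
  simpa using this

lemma derives_of_der {s : List (Symbol Unit g.NT)} {n k : ℕ} (h : Der g s n k) :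
    g.Derives s (List.replicate n (Symbol.terminal ())) := by
  induction h with
  | nil => exact Derives.refl []
  | term t _ ih =>
      rw [List.replicate_succ]
      simpa using ih.append_left [Symbol.terminal ()]
  | @nonterm rest n k m j r hr hout hrest ihout ihrest =>
      have step : g.Produces (Symbol.nonterminal r.input :: rest) (r.output ++ rest) := by
        refine ⟨r, hr, ?_⟩
        simpa using ContextFreeRule.rewrites_of_exists_parts r [] rest
      have d1 : g.Derives (r.output ++ rest)
          (List.replicate m (Symbol.terminal ()) ++ rest) := ihout.append_right rest
      have d2 : g.Derives (List.replicate m (Symbol.terminal ()) ++ rest)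
          (List.replicate m (Symbol.terminal ()) ++ List.replicate n (Symbol.terminal ())) :=
        ihrest.append_left _
      have := (step.trans_derives d1).trans d2
      rwa [← List.replicate_add] at this

lemma der_of_all_terminal (u : List Unit) :
    Der g (List.map Symbol.terminal u) u.length 0 := by
  induction u with
  | nil => exact Der.nil
  | cons t u' ih => exact Der.term t ih

lemma der_of_derives {s : List (Symbol Unit g.NT)} {u : List Unit}
    (h : g.Derives s (List.map Symbol.terminal u)) : ∃ k, Der g s u.length k := by
  induction h using Relation.ReflTransGen.head_induction_on with
  | refl => exact ⟨0, der_of_all_terminal u⟩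
  | head h1 _ ih =>
      obtain ⟨k, hk⟩ := ih
      obtain ⟨r, hr, hrw⟩ := h1
      obtain ⟨p, q, rfl, rfl⟩ := hrw.exists_parts
      obtain ⟨n12, k12, n3, k3, he, _, hpre, hq⟩ := hk.split
      obtain ⟨n1, k1, n2, k2, he2, _, hp, hout⟩ := hpre.split
      have hw : Der g [Symbol.nonterminal r.input] n2 (k2 + 1) := Der.wrap hr hout
      have hd := (hp.join hw).join hq
      have he3 : u.length = (n1 + n2) + n3 := by omega
      rw [he3]
      exact ⟨_, hd⟩

lemma Der1.cons {A : g.NT} {y : ℕ} (hy : Der1 g A y) {rest : List (Symbol Unit g.NT)} {n k : ℕ}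
    (hrest : Der g rest n k) :
    ∃ kk, Der g (Symbol.nonterminal A :: rest) (y + n) kk := by
  obtain ⟨jy, hy⟩ := hy
  obtain ⟨r', hr', hA, j'', hout', rfl⟩ := Der1_inv hy
  subst hA
  exact ⟨_, Der.nonterm hr' hout' hrest⟩

lemma heavy {α : List (Symbol Unit g.NT)} {n j : ℕ} (h : Der g α n j) :
    n ≤ α.length ∨ ∃ B x j' e, Der g [Symbol.nonterminal B] x j' ∧ j' ≤ j ∧ n = x + e ∧
      n ≤ α.length * (x + 1) ∧ ∀ y, Der1 g B y → ∃ kk, Der g α (y + e) kk := by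
  induction h with
  | nil => left; simp
  | @term rest n k t hrest ih =>
      rcases ih with hle | ⟨B, x, j', e, hB, hj, hne, hbound, hemb⟩
      · left; simpa using Nat.succ_le_succ hle
      · right
        refine ⟨B, x, j', e + 1, hB, hj, by omega, ?_, ?_⟩
        · have : (Symbol.terminal t :: rest).length * (x + 1)
              = rest.length * (x + 1) + (x + 1) := by simp; ring
          omega
        · intro y hy
          obtain ⟨kk, hkk⟩ := hemb y hy
          refine ⟨kk, ?_⟩
          rw [show y + (e + 1) = (y + e) + 1 by omega]
          exact Der.term t hkk
  | @nonterm rest n k m j r hr hout hrest ihout ihrest =>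
      have hw := Der.wrap hr hout
      have hlen : (Symbol.nonterminal r.input :: rest).length * (m + 1)
          = rest.length * (m + 1) + (m + 1) := by simp; ring
      rcases ihrest with hle | ⟨B, x, j', e, hB, hj, hne, hbound, hemb⟩
      · right
        refine ⟨r.input, m, j + 1, n, hw, by omega, rfl, ?_, ?_⟩
        · have h1 : rest.length ≤ rest.length * (m + 1) := Nat.le_mul_of_pos_right _ (by omega)
          omega
        · intro y hy
          exact hy.cons hrest
      · rcases le_or_gt x m with hxm | hxm
        · right
          refine ⟨r.input, m, j + 1, n, hw, by omega, rfl, ?_, ?_⟩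
          · have h1 : rest.length * (x + 1) ≤ rest.length * (m + 1) :=
              Nat.mul_le_mul_left _ (by omega)
            omega
          · intro y hy
            exact hy.cons hrest
        · right
          refine ⟨B, x, j', e + m, hB, by omega, by omega, ?_, ?_⟩
          · have hlen2 : (Symbol.nonterminal r.input :: rest).length * (x + 1)
                = rest.length * (x + 1) + (x + 1) := by simp; ring
            omega
          · intro y hy
            obtain ⟨kk, hkk⟩ := hemb y hy
            have hd := Der.nonterm hr hout hkk
            rw [show y + (e + m) = m + (y + e) by omega]
            exact ⟨_, hd⟩

variable (g)

def Mc : ℕ := (g.rules.sup fun r => r.output.length) + 1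
noncomputable def Inputs : Finset g.NT := @Finset.image _ _ (Classical.decEq _) (·.input) g.rules
noncomputable def Kc : ℕ := (Inputs g).card
def itf (x : ℕ) : ℕ := Mc g * x + Mc g
def uB (j : ℕ) : ℕ := (itf g)^[j] 0
noncomputable def Tc : ℕ := uB g (Kc g + 2)

variable {g}

lemma Mc_pos : 1 ≤ Mc g := Nat.succ_le_succ (Nat.zero_le _)

lemma len_le {r : ContextFreeRule Unit g.NT} (hr : r ∈ g.rules) :
    r.output.length + 1 ≤ Mc g :=
  Nat.succ_le_succ (Finset.le_sup (f := fun r => r.output.length) hr)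

lemma itf_mono : Monotone (itf g) := by
  intro a b hab
  unfold itf
  have := Mc_pos (g := g)
  nlinarith

lemma lt_itf (x : ℕ) : x < itf g x := by
  unfold itf
  have := Mc_pos (g := g)
  nlinarith

lemma uB_succ (j : ℕ) : uB g (j + 1) = itf g (uB g j) := Function.iterate_succ_apply' _ _ _

lemma uB_mono : Monotone (uB g) := by
  intro a b hab
  induction b with
  | zero => simpa [Nat.le_zero.mp hab]
  | succ b ih =>
      rcases Nat.lt_or_ge a (b + 1) with h | h
      · exact le_trans (ih (by omega)) (le_of_lt (by rw [uB_succ]; exact lt_itf _))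
      · have : a = b + 1 := by omega
        simp [this]

lemma iter_uB (a b : ℕ) : (itf g)^[a] (uB g b) = uB g (a + b) := by
  unfold uB
  rw [← Function.iterate_add_apply]

lemma Mc_eq_uB_one : Mc g = uB g 1 := by
  simp [uB, itf]

/-- The invariant carried while descending a heavy path, relative to top `A0`/`n0`. -/
def Good (A0 : g.NT) (n0 : ℕ) : List (g.NT × ℕ) → g.NT → ℕ → Prop
  | [], B, m => Emb g B A0 (n0 - m) ∧ m ≤ n0 ∧ uB g (Kc g + 1) < m
  | (C, v) :: t, B, m => Emb g B C (v - m) ∧ m < v ∧ v ≤ itf g m ∧ v ≤ Tc g ∧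
      Der1 g C v ∧ C ∈ Inputs g ∧ C ∉ t.map Prod.fst ∧ Good A0 n0 t C v

lemma Emb.comp {B C A : g.NT} {d1 d2 : ℕ} (h1 : Emb g B C d1) (h2 : Emb g C A d2) :
    Emb g B A (d1 + d2) := fun x hx => by
  have := h2 _ (h1 x hx)
  rwa [Nat.add_assoc] at this

lemma Emb.refl (A : g.NT) : Emb g A A 0 := fun x hx => by simpa using hx

lemma Good.emb_top {A0 : g.NT} {n0 : ℕ} {hist : List (g.NT × ℕ)} {B : g.NT} {m : ℕ}
    (h : Good A0 n0 hist B m) : Emb g B A0 (n0 - m) ∧ m ≤ n0 := by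
  induction hist generalizing B m with
  | nil => exact ⟨h.1, h.2.1⟩
  | cons p t ih =>
      obtain ⟨C, v⟩ := p
      obtain ⟨he, hmv, _, _, _, _, _, hG⟩ := h
      obtain ⟨he2, hvn⟩ := ih hG
      constructor
      · have := he.comp he2
        rwa [show v - m + (n0 - v) = n0 - m by omega] at this
      · omega

lemma Good.mem {A0 : g.NT} {n0 : ℕ} {hist : List (g.NT × ℕ)} {B : g.NT} {m : ℕ}
    (h : Good A0 n0 hist B m) : ∀ p ∈ hist,
      m < p.2 ∧ p.2 ≤ Tc g ∧ Emb g B p.1 (p.2 - m) ∧ Der1 g p.1 p.2 := by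
  induction hist generalizing B m with
  | nil => intro p hp; simp at hp
  | cons q t ih =>
      obtain ⟨C, v⟩ := q
      obtain ⟨he, hmv, _, hvT, hC, _, _, hG⟩ := h
      intro p hp
      rcases List.mem_cons.mp hp with rfl | hp
      · exact ⟨hmv, hvT, he, hC⟩
      · obtain ⟨h1, h2, h3, h4⟩ := ih hG p hp
        refine ⟨by omega, h2, ?_, h4⟩
        have := he.comp h3
        rwa [show v - m + (p.2 - v) = p.2 - m by omega] at this

lemma Good.nodup {A0 : g.NT} {n0 : ℕ} {hist : List (g.NT × ℕ)} {B : g.NT} {m : ℕ}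
    (h : Good A0 n0 hist B m) :
    (hist.map Prod.fst).Nodup ∧ ∀ p ∈ hist, p.1 ∈ Inputs g := by
  induction hist generalizing B m with
  | nil => simp
  | cons q t ih =>
      obtain ⟨C, v⟩ := q
      obtain ⟨_, _, _, _, _, hCin, hCnot, hG⟩ := h
      obtain ⟨ih1, ih2⟩ := ih hG
      refine ⟨List.nodup_cons.mpr ⟨hCnot, ih1⟩, ?_⟩
      intro p hp
      rcases List.mem_cons.mp hp with rfl | hp
      · exact hCin
      · exact ih2 p hp

lemma le_iterate (n x : ℕ) : x ≤ (itf g)^[n] x := by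
  induction n with
  | zero => simp
  | succ n ihn =>
      rw [Function.iterate_succ_apply']
      exact le_trans ihn (le_of_lt (lt_itf _))

lemma Good.chain_bound {A0 : g.NT} {n0 : ℕ} {hist : List (g.NT × ℕ)} {B : g.NT} {m : ℕ}
    (h : Good A0 n0 hist B m) : ∀ p ∈ hist, p.2 ≤ (itf g)^[hist.length] m := by
  induction hist generalizing B m with
  | nil => intro p hp; simp at hp
  | cons q t ih =>
      obtain ⟨C, v⟩ := q
      obtain ⟨_, _, hvm, _, _, _, _, hG⟩ := h
      intro p hp
      have key : (itf g)^[t.length] v ≤ (itf g)^[List.length ((C, v) :: t)] m := by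
        simp only [List.length_cons, Function.iterate_succ_apply]
        exact (itf_mono.iterate t.length) hvm
      rcases List.mem_cons.mp hp with rfl | hp
      · have h1 : v ≤ (itf g)^[t.length] (itf g m) :=
          le_trans hvm (le_iterate (g := g) _ _)
        simp only [List.length_cons, Function.iterate_succ_apply]
        exact h1
      · exact le_trans (ih hG p hp) key

lemma Good.last_gt {A0 : g.NT} {n0 : ℕ} {hist : List (g.NT × ℕ)} {B : g.NT} {m : ℕ}
    (h : Good A0 n0 hist B m) (hne : hist ≠ []) :
    ∃ p ∈ hist, uB g (Kc g + 1) < p.2 := by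
  induction hist generalizing B m with
  | nil => exact absurd rfl hne
  | cons q t ih =>
      obtain ⟨C, v⟩ := q
      obtain ⟨_, _, _, _, _, _, _, hG⟩ := h
      cases t with
      | nil => exact ⟨(C, v), by simp, hG.2.2⟩
      | cons q' t' =>
          obtain ⟨p, hp, hgt⟩ := ih hG (by simp)
          exact ⟨p, List.mem_cons_of_mem _ hp, hgt⟩

lemma Good.not_small {A0 : g.NT} {n0 : ℕ} {hist : List (g.NT × ℕ)} {B : g.NT} {m : ℕ}
    (h : Good A0 n0 hist B m) (hm : m ≤ Mc g) : False := by
  classical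
  cases hist with
  | nil =>
      have h1 : Mc g ≤ uB g (Kc g + 1) := by
        rw [Mc_eq_uB_one]; exact uB_mono (by omega)
      have := h.2.2
      omega
  | cons q t =>
      obtain ⟨p, hp, hgt⟩ := h.last_gt (by simp)
      have hcb := h.chain_bound p hp
      have hlen : (q :: t).length ≤ Kc g := by
        obtain ⟨hnd, hin⟩ := h.nodup
        have hsub : ((q :: t).map Prod.fst).toFinset ⊆ Inputs g := by
          intro a ha
          rw [List.mem_toFinset, List.mem_map] at ha
          obtain ⟨p', hp', rfl⟩ := ha
          exact hin p' hp'
        have hcard := Finset.card_le_card hsub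
        rwa [List.toFinset_card_of_nodup hnd, List.length_map] at hcard
      have h2 : (itf g)^[(q :: t).length] m ≤ uB g (Kc g + 1) := by
        calc (itf g)^[(q :: t).length] m
            ≤ (itf g)^[(q :: t).length] (uB g 1) := by
              refine itf_mono.iterate _ ?_
              rwa [← Mc_eq_uB_one]
          _ = uB g ((q :: t).length + 1) := iter_uB _ _
          _ ≤ uB g (Kc g + 1) := uB_mono (by omega)
      omega

lemma descend (A0 : g.NT) (n0 : ℕ) :
    ∀ j B m, Der g [Symbol.nonterminal B] m j →
      ∀ hist, Good A0 n0 hist B m →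
      ∃ d, 1 ≤ d ∧ d ≤ Tc g ∧ ∀ k, Der1 g A0 (n0 + k * d) := by
  intro j
  induction j using Nat.strong_induction_on with
  | _ j IH =>
  classical
  intro B m hD hist hG
  obtain ⟨r, hr, hA, j1, hout, rfl⟩ := Der1_inv hD
  rcases heavy hout with hle | ⟨B', x, j', e, hB', hj', hme, hbound, hemb⟩
  · exact absurd (le_trans hle (by have := len_le hr; omega)) (fun hh => hG.not_small hh)
  · have hmitf : m ≤ itf g x := by
      have h1 := len_le hr
      calc m ≤ r.output.length * (x + 1) := hbound
        _ ≤ (r.output.length + 1) * (x + 1) := Nat.mul_le_mul_right _ (by omega)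
        _ ≤ Mc g * (x + 1) := Nat.mul_le_mul_right _ h1
        _ = itf g x := by unfold itf; ring
    have hembB : Emb g B' B e := by
      intro y hy
      obtain ⟨kk, hkk⟩ := hemb y hy
      exact ⟨kk + 1, hA ▸ Der.wrap hr hkk⟩
    by_cases hex : e = 0
    · -- no drop in yield: continue down with the same history
      subst hex
      have hxm : x = m := by omega
      subst hxm
      have hG' : Good A0 n0 hist B' x := by
        cases hist with
        | nil =>
            refine ⟨?_, hG.2.1, hG.2.2⟩
            have := hembB.comp hG.1
            simpa using this
        | cons q t =>
            obtain ⟨C, v⟩ := q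
            obtain ⟨he, h2, h3, h4, h5, h6, h7, h8⟩ := hG
            refine ⟨?_, h2, h3, h4, h5, h6, h7, h8⟩
            have := hembB.comp he
            simpa using this
      exact IH j' (by omega) B' x hB' hist hG'
    · have hxm : x < m := by omega
      by_cases hm : Tc g < m
      · -- still above the tracking threshold: history must be empty
        have hnil : hist = [] := by
          cases hist with
          | nil => rfl
          | cons q t =>
              obtain ⟨C, v⟩ := q
              obtain ⟨_, h2, _, h4, _⟩ := hG
              omega
        subst hnil
        have hmn := hG.2.1
        have hG' : Good A0 n0 [] B' x := by
          refine ⟨?_, by omega, ?_⟩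
          · have := hembB.comp hG.1
            rwa [show e + (n0 - m) = n0 - x by omega] at this
          · -- x > uB (K+1) since itf x ≥ m > Tc = itf (uB (K+1))
            by_contra hcon
            push_neg at hcon
            have : itf g x ≤ itf g (uB g (Kc g + 1)) := itf_mono hcon
            have hT : itf g (uB g (Kc g + 1)) = Tc g := (uB_succ _).symm
            omega
        exact IH j' (by omega) B' x hB' [] hG'
      · push_neg at hm
        by_cases hmem : B ∈ hist.map Prod.fst
        · -- FIRE: a repeated nonterminal with strictly bigger yield above us
          rw [List.mem_map] at hmem
          obtain ⟨p, hp, hpB⟩ := hmem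
          obtain ⟨h1, h2, h3, h4⟩ := hG.mem p hp
          rw [hpB] at h3
          set d := p.2 - m with hd
          have hpump : ∀ k, Der1 g B (m + k * d) := by
            intro k
            induction k with
            | zero => simpa using ⟨_, hD⟩
            | succ k ihk =>
                have := h3 _ ihk
                rwa [show m + k * d + d = m + (k + 1) * d by ring] at this
          obtain ⟨htop, hmn⟩ := hG.emb_top
          refine ⟨d, by omega, by omega, ?_⟩
          intro k
          have := htop _ (hpump k)
          rwa [show m + k * d + (n0 - m) = n0 + k * d by omega] at this
        · -- PUSH the current pair onto the history
          have hG' : Good A0 n0 ((B, m) :: hist) B' x := by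
            refine ⟨?_, hxm, hmitf, hm, ⟨_, hD⟩, ?_, hmem, hG⟩
            · rw [show m - x = e by omega]; exact hembB
            · rw [Inputs, Finset.mem_image]
              exact ⟨r, hr, hA⟩
          exact IH j' (by omega) B' x hB' _ hG'

lemma pump {n0 : ℕ} (h : Der1 g g.initial n0) (hn : Tc g < n0) :
    ∃ d, 1 ≤ d ∧ d ≤ Tc g ∧ ∀ k, Der1 g g.initial (n0 + k * d) := by
  obtain ⟨j, hD⟩ := h
  refine descend g.initial n0 j _ _ hD [] ⟨?_, le_refl _, ?_⟩
  · rw [Nat.sub_self]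
    exact Emb.refl g.initial
  · have : uB g (Kc g + 1) < uB g (Kc g + 2) := by
      conv_rhs => rw [uB_succ]
      exact lt_itf _
    unfold Tc at hn
    omega

lemma pump_step {n : ℕ} (h : Der1 g g.initial n) (hn : Tc g < n) :
    Der1 g g.initial (n + Nat.factorial (Tc g)) := by
  obtain ⟨d, hd1, hd2, hp⟩ := pump h hn
  have hdvd : d ∣ Nat.factorial (Tc g) := Nat.dvd_factorial hd1 hd2
  have := hp (Nat.factorial (Tc g) / d)
  rwa [Nat.div_mul_cancel hdvd] at this

lemma mem_lang_iff (n : ℕ) : List.replicate n () ∈ g.language ↔ Der1 g g.initial n := by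
  rw [ContextFreeGrammar.mem_language_iff]
  constructor
  · intro h
    have := der_of_derives h
    simpa [Der1] using this
  · intro ⟨j, hD⟩
    have := derives_of_der hD
    simpa [List.map_replicate] using this

lemma two_sided (S : Set ℕ) (N P : ℕ) (hP : 1 ≤ P)
    (h : ∀ n, N ≤ n → n ∈ S → n + P ∈ S) :
    ∃ N', ∀ n, N' ≤ n → (n ∈ S ↔ n + P ∈ S) := by
  classical
  have climb : ∀ (k m : ℕ), N ≤ m → m ∈ S → m + k * P ∈ S := by
    intro k
    induction k with
    | zero => intro m _ hm; simpa using hm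
    | succ k ih =>
        intro m hNm hm
        have := h (m + k * P) (by omega) (ih m hNm hm)
        rwa [show m + k * P + P = m + (k + 1) * P by ring] at this
  set f : ℕ → ℕ := fun r => if hex : ∃ m, m ∈ S ∧ N ≤ m ∧ m % P = r then Nat.find hex else 0
    with hf
  refine ⟨N + P + (Finset.range P).sup f, ?_⟩
  intro n hn
  constructor
  · intro hS
    exact h n (by omega) hS
  · intro hS
    have hex : ∃ m, m ∈ S ∧ N ≤ m ∧ m % P = n % P :=
      ⟨n + P, hS, by omega, by simp⟩
    have hfm : f (n % P) = Nat.find hex := by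
      rw [hf]
      exact dif_pos hex
    have hsup : f (n % P) ≤ (Finset.range P).sup f :=
      Finset.le_sup (Finset.mem_range.mpr (Nat.mod_lt _ (by omega)))
    obtain ⟨hmS, hmN, hmmod⟩ := Nat.find_spec hex
    have hmn : Nat.find hex ≤ n := by omega
    have hdvd : P ∣ n - Nat.find hex :=
      (Nat.modEq_iff_dvd' hmn).mp hmmod
    obtain ⟨k, hk⟩ := hdvd
    have hnk : n = Nat.find hex + k * P := by
      have h2 := (Nat.sub_eq_iff_eq_add hmn).mp hk
      conv_lhs => rw [h2]
      ring
    rw [hnk]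
    exact climb k _ hmN hmS

lemma regular_of_periodic (L : Language Unit) (N P : ℕ) (hP : 1 ≤ P)
    (h : ∀ n, N ≤ n → (List.replicate n () ∈ L ↔ List.replicate (n + P) () ∈ L)) :
    L.IsRegular := by
  classical
  have hQ : 0 < N + P := by omega
  refine ⟨Fin (N + P), inferInstance, ⟨fun i _ => if hlt : i.val + 1 < N + P then ⟨i.val + 1, hlt⟩
      else ⟨N, by omega⟩, ⟨0, hQ⟩, {i | List.replicate i.val () ∈ L}⟩, ?_⟩
  set M : DFA Unit (Fin (N + P)) := ⟨fun i _ => if hlt : i.val + 1 < N + P then ⟨i.val + 1, hlt⟩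
      else ⟨N, by omega⟩, ⟨0, hQ⟩, {i | List.replicate i.val () ∈ L}⟩ with hM
  have climb : ∀ (k m : ℕ), N ≤ m →
      (List.replicate m () ∈ L ↔ List.replicate (m + k * P) () ∈ L) := by
    intro k
    induction k with
    | zero => intro m _; simp
    | succ k ih =>
        intro m hNm
        rw [ih m hNm, h (m + k * P) (by omega),
          show m + k * P + P = m + (k + 1) * P by ring]
  have key : ∀ n : ℕ, ∃ i : Fin (N + P), M.eval (List.replicate n ()) = i ∧
      ∃ k, n = i.val + k * P ∧ (k ≠ 0 → N ≤ i.val) := by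
    intro n
    induction n with
    | zero => exact ⟨⟨0, hQ⟩, rfl, 0, by simp, by simp⟩
    | succ n ih =>
        obtain ⟨i, hi, k, hk, hkN⟩ := ih
        rw [show (n + 1 : ℕ) = n + 1 from rfl, List.replicate_succ',
          DFA.eval, DFA.evalFrom_append_singleton, ← DFA.eval, hi]
        by_cases hlt : i.val + 1 < N + P
        · refine ⟨⟨i.val + 1, hlt⟩, ?_, k, by simp only [Fin.val_mk]; omega,
            fun hk0 => le_trans (hkN hk0) (by simp only [Fin.val_mk]; omega)⟩
          show M.step i () = _
          simp [hM, hlt]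
        · refine ⟨⟨N, by omega⟩, ?_, k + 1, by
              simp only [Fin.val_mk]
              have hkp : (k + 1) * P = k * P + P := by ring
              omega, fun _ => le_refl N⟩
          show M.step i () = _
          simp [hM, hlt]
  have haccept : ∀ n : ℕ, (List.replicate n () ∈ M.accepts ↔ List.replicate n () ∈ L) := by
    intro n
    obtain ⟨i, hi, k, hk, hkN⟩ := key n
    rw [DFA.mem_accepts]
    show M.eval _ ∈ M.accept ↔ _
    rw [hi]
    rcases Nat.eq_zero_or_pos k with rfl | hkpos
    · have : n = i.val := by omega
      subst this
      rfl
    · have hN : N ≤ i.val := hkN (by omega)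
      have := climb k i.val hN
      rw [hk]
      exact ⟨fun hh => (this).mp hh, fun hh => (this).mpr hh⟩
  ext w
  have hw : w = List.replicate w.length () := by
    apply List.eq_replicate_length.mpr
    intro b _
    rfl
  rw [hw]
  exact haccept w.length

end UnaryCF

open UnaryCF in
/-- Every context-free language over a one-letter (unary) alphabet is regular. -/
theorem unary_contextFree_isRegular (L : Language Unit)
    (hL : L.IsContextFree) : L.IsRegular := by
  obtain ⟨g, rfl⟩ := hL
  have hstep : ∀ n, Tc g + 1 ≤ n → n ∈ {n | List.replicate n () ∈ g.language} →
      n + Nat.factorial (Tc g) ∈ {n | List.replicate n () ∈ g.language} := by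
    intro n hn hmem
    simp only [Set.mem_setOf_eq, mem_lang_iff] at hmem ⊢
    exact pump_step hmem (by omega)
  obtain ⟨N', hN'⟩ := two_sided {n | List.replicate n () ∈ g.language} (Tc g + 1)
    (Nat.factorial (Tc g)) (Nat.factorial_pos _) hstep
  exact regular_of_periodic _ N' _ (Nat.factorial_pos _) (fun n hn => hN' n hn)
end

section
/- Let L ⊆ A^* be context-free and h : A^* → {a}^* the morphism sending every letter to the single letter a (so h(w) = a^{|w|}). Then h(L) = { a^{|w|} : w ∈ L } is a regular language. -/
open List

namespace LenPump
variable {T : Type*}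

/-- `DerS g h s w`: symbol `s` derives terminal word `w` with a parse tree of height `≤ h`
(terminal leaves cost nothing). -/
def DerS (g : ContextFreeGrammar T) : ℕ → Symbol T g.NT → List T → Prop
  | _, .terminal t, w => w = [t]
  | 0, .nonterminal _, _ => False
  | h+1, .nonterminal B, w => ∃ r ∈ g.rules, r.input = B ∧
      ∃ ws : List (List T), w = ws.flatten ∧ List.Forall₂ (DerS g h) r.output ws

variable {g : ContextFreeGrammar T}

lemma DerS.terminal_iff {h : ℕ} {t : T} {w : List T} :
    DerS g h (.terminal t) w ↔ w = [t] := by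
  cases h <;> simp [DerS]

lemma DerS.nt_succ_iff {h : ℕ} {B : g.NT} {w : List T} :
    DerS g (h+1) (.nonterminal B) w ↔ ∃ r ∈ g.rules, r.input = B ∧
      ∃ ws : List (List T), w = ws.flatten ∧ List.Forall₂ (DerS g h) r.output ws := by
  simp [DerS]

lemma DerS.nt_zero {B : g.NT} {w : List T} : ¬ DerS g 0 (.nonterminal B) w := by
  simp [DerS]

lemma forall₂_append_split {α β : Type*} {R : α → β → Prop} :
    ∀ {a b : List α} {l : List β}, List.Forall₂ R (a ++ b) l →
      ∃ u v, l = u ++ v ∧ List.Forall₂ R a u ∧ List.Forall₂ R b v := by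
  intro a
  induction a with
  | nil => exact fun h => ⟨[], _, rfl, List.Forall₂.nil, h⟩
  | cons x a ih =>
    intro b l h
    rcases List.forall₂_cons_left_iff.mp h with ⟨y, l', hxy, h', rfl⟩
    rcases ih h' with ⟨u, v, rfl, hu, hv⟩
    exact ⟨y :: u, v, rfl, List.Forall₂.cons hxy hu, hv⟩

lemma forall₂_append_mk {α β : Type*} {R : α → β → Prop} :
    ∀ {a b : List α} {u v : List β}, List.Forall₂ R a u → List.Forall₂ R b v →
      List.Forall₂ R (a ++ b) (u ++ v) := by
  intro a b u v h
  induction h with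
  | nil => exact id
  | cons h1 _ ih => exact fun hb => List.Forall₂.cons h1 (ih hb)

lemma DerS.mono_succ : ∀ {h : ℕ} {s : Symbol T g.NT} {w : List T},
    DerS g h s w → DerS g (h+1) s w := by
  intro h
  induction h with
  | zero =>
    intro s w hs
    cases s with
    | terminal t => rw [DerS.terminal_iff] at *; exact hs
    | nonterminal B => exact absurd hs DerS.nt_zero
  | succ h ih =>
    intro s w hs
    cases s with
    | terminal t => rw [DerS.terminal_iff] at *; exact hs
    | nonterminal B =>
      rw [DerS.nt_succ_iff] at *
      obtain ⟨r, hr, hin, ws, rfl, hf⟩ := hs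
      exact ⟨r, hr, hin, ws, rfl, hf.imp fun _ _ hd => ih hd⟩

lemma DerS.mono {h h' : ℕ} (hle : h ≤ h') {s : Symbol T g.NT} {w : List T}
    (hs : DerS g h s w) : DerS g h' s w := by
  induction hle with
  | refl => exact hs
  | step _ ih => exact ih.mono_succ


lemma derives_of_forall₂ {α : List (Symbol T g.NT)} {ws : List (List T)}
    (h : List.Forall₂ (fun s x => g.Derives [s] (x.map Symbol.terminal)) α ws) :
    g.Derives α (ws.flatten.map Symbol.terminal) := by
  induction h with
  | nil => rfl
  | @cons s x α' ws' h1 _ ih =>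
    show g.Derives ([s] ++ α') _
    rw [List.flatten_cons, List.map_append]
    exact (h1.append_right α').trans (ih.append_left (x.map Symbol.terminal))

lemma DerS.derives : ∀ {h : ℕ} {s : Symbol T g.NT} {w : List T},
    DerS g h s w → g.Derives [s] (w.map Symbol.terminal) := by
  intro h
  induction h with
  | zero =>
    intro s w hs
    cases s with
    | terminal t => rw [DerS.terminal_iff] at hs; subst hs; rfl
    | nonterminal B => exact absurd hs DerS.nt_zero
  | succ h ih =>
    intro s w hs
    cases s with
    | terminal t => rw [DerS.terminal_iff] at hs; subst hs; rfl
    | nonterminal B =>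
      rw [DerS.nt_succ_iff] at hs
      obtain ⟨r, hr, hin, ws, rfl, hf⟩ := hs
      have hstep : g.Produces [Symbol.nonterminal B] r.output := by
        refine ⟨r, hr, ?_⟩
        rw [← hin]
        exact ContextFreeRule.Rewrites.input_output
      exact hstep.trans_derives (derives_of_forall₂ (hf.imp fun _ _ hd => ih hd))

lemma forall₂_of_derives : ∀ {α : List (Symbol T g.NT)} {w : List T},
    g.Derives α (w.map Symbol.terminal) →
    ∃ h ws, w = ws.flatten ∧ List.Forall₂ (DerS g h) α ws := by
  intro α w hd
  induction hd using Relation.ReflTransGen.head_induction_on with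
  | refl =>
    refine ⟨0, w.map (fun t => [t]), ?_, ?_⟩
    · induction w with
      | nil => rfl
      | cons t w ih => simpa using ih
    · rw [List.forall₂_map_left_iff, List.forall₂_map_right_iff]
      exact List.forall₂_same.mpr fun t _ => DerS.terminal_iff.mpr rfl
  | @head α' β' hp _ ih =>
    obtain ⟨h, ws, rfl, hf⟩ := ih
    obtain ⟨r, hr, hrw⟩ := hp
    obtain ⟨p, q, rfl, rfl⟩ := hrw.exists_parts
    obtain ⟨wrest, wq, rfl, hfrest, hfq⟩ := forall₂_append_split hf
    obtain ⟨wp, wr, rfl, hfp, hfr⟩ := forall₂_append_split hfrest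
    refine ⟨h + 1, wp ++ [wr.flatten] ++ wq, by simp, ?_⟩
    refine forall₂_append_mk (forall₂_append_mk (hfp.imp fun _ _ hd => hd.mono_succ) ?_)
      (hfq.imp fun _ _ hd => hd.mono_succ)
    exact List.Forall₂.cons (DerS.nt_succ_iff.mpr ⟨r, hr, rfl, wr, rfl, hfr⟩) List.Forall₂.nil

/-! ### Length sets, embeddings, pumping -/

/-- Lengths of terminal words derivable from nonterminal `A`. -/
def LS (g : ContextFreeGrammar T) (A : g.NT) (n : ℕ) : Prop :=
  ∃ w h, DerS g h (.nonterminal A) w ∧ w.length = n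

/-- Lengths derivable with a tree of height `≤ h`. -/
def LH (g : ContextFreeGrammar T) (A : g.NT) (n h : ℕ) : Prop :=
  ∃ w, DerS g h (.nonterminal A) w ∧ w.length = n

/-- Every word of `B` of length `n` yields a word of `A` of length `n + d`. -/
def Emb (g : ContextFreeGrammar T) (A B : g.NT) (d : ℕ) : Prop :=
  ∀ n, LS g B n → LS g A (n + d)

lemma LH.ls {A : g.NT} {n h : ℕ} (hA : LH g A n h) : LS g A n := by
  obtain ⟨w, hw, hl⟩ := hA; exact ⟨w, h, hw, hl⟩

lemma LH.mono {A : g.NT} {n h h' : ℕ} (hle : h ≤ h') (hA : LH g A n h) : LH g A n h' := by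
  obtain ⟨w, hw, hl⟩ := hA; exact ⟨w, hw.mono hle, hl⟩

lemma LH.not_zero {A : g.NT} {n : ℕ} (hA : LH g A n 0) : False := by
  obtain ⟨w, hw, -⟩ := hA; exact DerS.nt_zero hw

lemma Emb.refl (A : g.NT) : Emb g A A 0 := fun n hn => by simpa using hn

lemma Emb.trans {A B C : g.NT} {d e : ℕ} (h1 : Emb g A B d) (h2 : Emb g B C e) :
    Emb g A C (e + d) := fun n hn => by
  have := h1 _ (h2 n hn); rwa [add_assoc] at this

lemma Emb.iter {B : g.NT} {k n : ℕ} (hE : Emb g B B k) (hn : LS g B n) :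
    ∀ t, LS g B (n + t * k)
  | 0 => by simpa using hn
  | (t+1) => by
      have := hE _ (Emb.iter hE hn t)
      rwa [add_assoc, ← Nat.succ_mul] at this

lemma emb_of_parts {r : ContextFreeRule T g.NT} (hr : r ∈ g.rules) {A B : g.NT}
    {a b : List (Symbol T g.NT)} {u v : List (List T)} {h : ℕ}
    (hin : r.input = A) (hout : r.output = a ++ Symbol.nonterminal B :: b)
    (hu : List.Forall₂ (DerS g h) a u) (hv : List.Forall₂ (DerS g h) b v) :
    Emb g A B (u.flatten.length + v.flatten.length) := by
  rintro n ⟨x, h', hx, rfl⟩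
  refine ⟨(u ++ x :: v).flatten, max h h' + 1, ?_, ?_⟩
  · rw [DerS.nt_succ_iff]
    refine ⟨r, hr, hin, u ++ x :: v, rfl, ?_⟩
    rw [hout]
    exact forall₂_append_mk (hu.imp fun _ _ hd => hd.mono (le_max_left _ _))
      (List.Forall₂.cons (hx.mono (le_max_right _ _))
        (hv.imp fun _ _ hd => hd.mono (le_max_left _ _)))
  · simp only [List.flatten_append, List.flatten_cons, List.length_append]
    omega

/-- The relevant finite set of nonterminals: inputs of rules. -/
noncomputable def NTS (g : ContextFreeGrammar T) : Finset g.NT :=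
  @Finset.image _ _ (Classical.decEq g.NT) ContextFreeRule.input g.rules

lemma mem_NTS {A : g.NT} {n h : ℕ} (hA : LH g A n (h+1)) : A ∈ NTS g := by
  obtain ⟨w, hw, -⟩ := hA
  rw [DerS.nt_succ_iff] at hw
  obtain ⟨r, hr, hin, -⟩ := hw
  exact (@Finset.mem_image _ _ (Classical.decEq g.NT) _ _ _).mpr ⟨r, hr, hin⟩

/-- Bound on rule output lengths (at least 2). -/
def Mg (g : ContextFreeGrammar T) : ℕ :=
  2 ⊔ g.rules.sup (fun r => r.output.length)

lemma two_le_Mg : 2 ≤ Mg g := le_sup_left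

lemma flatten_length_le {K : ℕ} : ∀ {α : List (Symbol T g.NT)} {ws : List (List T)},
    List.Forall₂ (fun (_ : Symbol T g.NT) (w : List T) => w.length ≤ K) α ws →
    ws.flatten.length ≤ α.length * K := by
  intro α ws h
  induction h with
  | nil => simp
  | cons h1 _ ih =>
    simp only [List.flatten_cons, List.length_append, List.length_cons, Nat.succ_mul]
    omega

lemma DerS.length_le : ∀ {h : ℕ} {s : Symbol T g.NT} {w : List T},
    DerS g h s w → w.length ≤ Mg g ^ h := by
  intro h
  induction h with
  | zero =>
    intro s w hs
    cases s with
    | terminal t => rw [DerS.terminal_iff] at hs; subst hs; simp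
    | nonterminal B => exact absurd hs DerS.nt_zero
  | succ h ih =>
    intro s w hs
    cases s with
    | terminal t =>
      rw [DerS.terminal_iff] at hs; subst hs
      simpa using Nat.one_le_pow _ _ (by have := two_le_Mg (g := g); omega)
    | nonterminal B =>
      rw [DerS.nt_succ_iff] at hs
      obtain ⟨r, hr, hin, ws, rfl, hf⟩ := hs
      have h1 : ws.flatten.length ≤ r.output.length * Mg g ^ h :=
        flatten_length_le (hf.imp fun _ _ hd => ih hd)
      have h2 : r.output.length ≤ Mg g :=
        le_trans (Finset.le_sup (f := fun r => r.output.length) hr) le_sup_right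
      calc ws.flatten.length ≤ r.output.length * Mg g ^ h := h1
        _ ≤ Mg g * Mg g ^ h := Nat.mul_le_mul_right _ h2
        _ = Mg g ^ (h+1) := by rw [pow_succ]; ring

lemma LH.length_le {A : g.NT} {n h : ℕ} (hA : LH g A n h) : n ≤ Mg g ^ h := by
  obtain ⟨w, hw, rfl⟩ := hA; exact hw.length_le

/-- Replace all children by trees one lower, preserving lengths. -/
lemma replace_all {h : ℕ} : ∀ {α : List (Symbol T g.NT)} {ws : List (List T)},
    List.Forall₂ (DerS g (h+1)) α ws →
    (∀ a B b u x v, α = a ++ Symbol.nonterminal B :: b → ws = u ++ x :: v →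
      List.Forall₂ (DerS g (h+1)) a u → List.Forall₂ (DerS g (h+1)) b v →
      DerS g (h+1) (.nonterminal B) x →
      ∃ x', x'.length = x.length ∧ DerS g h (.nonterminal B) x') →
    ∃ ws', ws'.map List.length = ws.map List.length ∧ List.Forall₂ (DerS g h) α ws' := by
  intro α ws hf
  induction hf with
  | nil => intro _; exact ⟨[], rfl, .nil⟩
  | @cons s x α' ws' h1 h2 ih =>
    intro H
    obtain ⟨ws'', hlen, hf'⟩ := ih (fun a B b u x' v ha hw hu hv hx =>
      H (s :: a) B b (x :: u) x' v (by rw [ha]; rfl) (by rw [hw]; rfl) (.cons h1 hu) hv hx)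
    cases s with
    | terminal t =>
      have hx : x = [t] := DerS.terminal_iff.mp h1
      exact ⟨x :: ws'', by simp [hlen], .cons (DerS.terminal_iff.mpr hx) hf'⟩
    | nonterminal B =>
      obtain ⟨x', hx'len, hx'⟩ := H [] B α' [] x ws' rfl rfl .nil h2 h1
      exact ⟨x' :: ws'', by simp [hlen, hx'len], .cons hx' hf'⟩

/-- From a minimal-height tree, descend to a child of minimal height one less. -/
lemma descend {A : g.NT} {n h : ℕ} (hA : LH g A n (h+2)) (hmin : ¬ LH g A n (h+1)) :
    ∃ B n' d, LH g B n' (h+1) ∧ ¬ LH g B n' h ∧ Emb g A B d ∧ n = n' + d := by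
  classical
  obtain ⟨w, hw, rfl⟩ := hA
  rw [DerS.nt_succ_iff] at hw
  obtain ⟨r, hr, hin, ws, rfl, hf⟩ := hw
  by_contra hcon
  have H : ∀ a B b u x v, r.output = a ++ Symbol.nonterminal B :: b →
      ws = u ++ x :: v → List.Forall₂ (DerS g (h+1)) a u →
      List.Forall₂ (DerS g (h+1)) b v → DerS g (h+1) (.nonterminal B) x →
      ∃ x', x'.length = x.length ∧ DerS g h (.nonterminal B) x' := by
    intro a B b u x v ha hws hu hv hx
    by_contra hno
    push_neg at hno
    apply hcon
    refine ⟨B, x.length, u.flatten.length + v.flatten.length, ⟨x, hx, rfl⟩, ?_,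
      emb_of_parts hr hin ha hu hv, ?_⟩
    · rintro ⟨x', hx', hlen⟩
      exact hno x' hlen hx'
    · subst hws
      simp only [List.flatten_append, List.flatten_cons, List.length_append]
      omega
  obtain ⟨ws', hlen, hf'⟩ := replace_all hf H
  refine hmin ⟨ws'.flatten, DerS.nt_succ_iff.mpr ⟨r, hr, hin, ws', rfl, hf'⟩, ?_⟩
  rw [List.length_flatten, List.length_flatten, hlen]

/-- Main pumping induction. -/
lemma mainAux : ∀ (h : ℕ) (F : Finset g.NT) (A : g.NT) (n : ℕ),
    LH g A n h → (∀ h' < h, ¬ LH g A n h') →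
    (∀ C ∈ F, ∃ d hC, Emb g C A d ∧ LH g C (n+d) hC ∧ h < hC ∧ ∀ h' < hC, ¬ LH g C (n+d) h') →
    F ⊆ NTS g → (NTS g).card < F.card + h →
    ∃ B k d nB, B ∈ NTS g ∧ 1 ≤ k ∧ Emb g B B k ∧ Emb g A B d ∧ LS g B nB ∧ n = nB + d := by
  classical
  intro h
  induction h with
  | zero => exact fun F A n hA _ _ _ _ => absurd hA (fun hA => hA.not_zero)
  | succ h ih =>
    intro F A n hA hm HF hFN hcard
    by_cases hAF : A ∈ F
    · obtain ⟨d, hC, hEmb, hLH, hlt, hmin'⟩ := HF A hAF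
      rcases Nat.eq_zero_or_pos d with rfl | hd
      · exact absurd (by simpa using hA) (hmin' (h+1) hlt)
      · exact ⟨A, d, 0, n, hFN hAF, hd, hEmb, Emb.refl A, hA.ls, (add_zero n).symm⟩
    · have hAN : A ∈ NTS g := mem_NTS hA
      have hcard1 : F.card + 1 ≤ (NTS g).card := by
        have hsub : insert A F ⊆ NTS g := Finset.insert_subset hAN hFN
        have := Finset.card_le_card hsub
        rwa [Finset.card_insert_of_notMem hAF] at this
      cases h with
      | zero => omega
      | succ h' =>
        obtain ⟨B, n', d, hB, hBmin, hEmbAB, rfl⟩ := descend hA (hm (h'+1) (by omega))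
        have ihres := ih (insert A F) B n' hB
          (fun h'' hlt hLH => hBmin (hLH.mono (by omega)))
          (by
            intro C hC
            rcases Finset.mem_insert.mp hC with rfl | hCF
            · exact ⟨d, h'+2, hEmbAB, hA, by omega, hm⟩
            · obtain ⟨dC, hC2, hEmb, hLH, hlt, hmin'⟩ := HF C hCF
              refine ⟨d + dC, hC2, hEmb.trans hEmbAB, ?_, by omega, ?_⟩
              · rwa [← add_assoc]
              · intro h'' h''lt
                rw [← add_assoc]
                exact hmin' h'' h''lt)
          (Finset.insert_subset hAN hFN)
          (by rw [Finset.card_insert_of_notMem hAF]; omega)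
        obtain ⟨B₀, k, d₀, nB, hBN, hk, hBB, hAB₀, hLS, rfl⟩ := ihres
        exact ⟨B₀, k, d₀ + d, nB, hBN, hk, hBB, hEmbAB.trans hAB₀, hLS, by omega⟩

/-- The pumping theorem for length sets: beyond a threshold, the length set of
the initial nonterminal is closed under adding a fixed positive period. -/
theorem pump (g : ContextFreeGrammar T) : ∃ p P : ℕ, 1 ≤ P ∧
    ∀ n, LS g g.initial n → p ≤ n → LS g g.initial (n + P) := by
  classical
  set SE : g.NT → Prop := fun B => ∃ k, 1 ≤ k ∧ Emb g B B k with hSE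
  set kf : g.NT → ℕ := fun B => if hB : SE B then hB.choose else 1 with hkf
  have hkf1 : ∀ B, 1 ≤ kf B := by
    intro B
    simp only [hkf]
    split
    · next hB => exact hB.choose_spec.1
    · exact le_refl 1
  have hkfE : ∀ B, SE B → Emb g B B (kf B) := by
    intro B hB
    simp only [hkf]
    split
    · next hB' => exact hB'.choose_spec.2
    · next hB' => exact absurd hB hB'
  refine ⟨Mg g ^ (NTS g).card + 1, ∏ B ∈ NTS g, kf B,
    Finset.one_le_prod' (fun B _ => hkf1 B), ?_⟩
  intro n hn hp
  obtain ⟨w, h₀, hw, rfl⟩ := hn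
  have hex : ∃ h, LH g g.initial w.length h := ⟨h₀, w, hw, rfl⟩
  set hmin := Nat.find hex with hhmin
  have hLH : LH g g.initial w.length hmin := Nat.find_spec hex
  have hminspec : ∀ h' < hmin, ¬ LH g g.initial w.length h' := fun h' hlt => Nat.find_min hex hlt
  have hcard : (NTS g).card < hmin := by
    have h1 : w.length ≤ Mg g ^ hmin := hLH.length_le
    have h2 : Mg g ^ (NTS g).card < Mg g ^ hmin := by omega
    exact (Nat.pow_lt_pow_iff_right (by have := two_le_Mg (g := g); omega)).mp h2
  obtain ⟨B, k, d, nB, hBN, hk, hBB, hAB, hLS, hn_eq⟩ :=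
    mainAux hmin ∅ g.initial w.length hLH hminspec (by simp) (by simp) (by simpa using hcard)
  have hSEB : SE B := ⟨k, hk, hBB⟩
  obtain ⟨c, hc⟩ : kf B ∣ ∏ B ∈ NTS g, kf B := Finset.dvd_prod_of_mem kf hBN
  have hpump : LS g B (nB + c * kf B) := (hkfE B hSEB).iter hLS c
  have := hAB _ hpump
  have heq : nB + c * kf B + d = w.length + ∏ B ∈ NTS g, kf B := by
    rw [hc]; ring_nf; omega
  rwa [heq] at this

/-! ### Unary languages with eventually periodic length sets are regular -/

theorem unary_regular (S : Set ℕ) (p P : ℕ) (hP : 1 ≤ P)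
    (hcl : ∀ n ∈ S, p ≤ n → n + P ∈ S) :
    Language.IsRegular {x : List Unit | x.length ∈ S} := by
  classical
  have hiter : ∀ n, n ∈ S → p ≤ n → ∀ t, n + t * P ∈ S := by
    intro n hn hp t
    induction t with
    | zero => simpa using hn
    | succ t ih =>
      have := hcl _ ih (by omega)
      rwa [add_assoc, ← Nat.succ_mul] at this
  set N₀ : ℕ := p + 1 + (Finset.range P).sup
      (fun r => sInf {n | n ∈ S ∧ p ≤ n ∧ n % P = r}) with hN₀
  have hpN : p + 1 ≤ N₀ := by rw [hN₀]; omega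
  have hback : ∀ n, N₀ ≤ n → n + P ∈ S → n ∈ S := by
    intro n hn hnP
    have hrP : n % P < P := Nat.mod_lt _ (by omega)
    have hmem : n + P ∈ {n' | n' ∈ S ∧ p ≤ n' ∧ n' % P = n % P} :=
      ⟨hnP, by omega, by rw [Nat.add_mod_right]⟩
    have hminmem : sInf {n' | n' ∈ S ∧ p ≤ n' ∧ n' % P = n % P} ∈
        {n' | n' ∈ S ∧ p ≤ n' ∧ n' % P = n % P} := Nat.sInf_mem ⟨n + P, hmem⟩
    set m := sInf {n' | n' ∈ S ∧ p ≤ n' ∧ n' % P = n % P} with hm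
    have hmn : m ≤ n := by
      have h1 : sInf {n' | n' ∈ S ∧ p ≤ n' ∧ n' % P = n % P} ≤
          (Finset.range P).sup (fun r => sInf {n' | n' ∈ S ∧ p ≤ n' ∧ n' % P = r}) :=
        Finset.le_sup (f := fun r => sInf {n' | n' ∈ S ∧ p ≤ n' ∧ n' % P = r})
          (Finset.mem_range.mpr hrP)
      omega
    have hdvd : P ∣ n - m := (Nat.modEq_iff_dvd' hmn).mp hminmem.2.2
    obtain ⟨c, hc⟩ := hdvd
    have hS : m + c * P ∈ S := hiter m hminmem.1 hminmem.2.1 c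
    have h2 : P * c + m = n := by rw [← hc]; omega
    have h3 : m + c * P = n := by rw [← h2]; ring
    rwa [h3] at hS
  have hper : ∀ t n, N₀ ≤ n → (n ∈ S ↔ n + t * P ∈ S) := by
    intro t
    induction t with
    | zero => simp
    | succ t ih =>
      intro n hn
      rw [ih n hn]
      have h1 : (n + t * P ∈ S) ↔ (n + t * P + P ∈ S) :=
        ⟨fun h => hcl _ h (by omega), fun h => hback _ (by omega) h⟩
      rw [h1]
      have : n + t * P + P = n + (t + 1) * P := by ring
      rw [this]
  set ψ : ℕ → ℕ := fun n => if n < N₀ + P then n else N₀ + (n - N₀) % P with hψ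
  have hψlt : ∀ n, ψ n < N₀ + P := by
    intro n
    simp only [hψ]
    split
    · assumption
    · have : (n - N₀) % P < P := Nat.mod_lt _ (by omega)
      omega
  have hψstep : ∀ n, ψ (n + 1) = ψ (ψ n + 1) := by
    intro n
    by_cases h1 : n < N₀ + P
    · have : ψ n = n := if_pos h1
      rw [this]
    · have hxn : ψ n = N₀ + (n - N₀) % P := if_neg h1
      push_neg at h1
      have hsub : n + 1 - N₀ = (n - N₀) + 1 := by omega
      have hL : ψ (n + 1) = N₀ + ((n - N₀) % P + 1) % P := by
        rw [hψ]
        simp only []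
        rw [if_neg (by omega), hsub, ← Nat.mod_add_mod]
      set e := (n - N₀) % P with he
      have heP : e < P := Nat.mod_lt _ (by omega)
      by_cases h2 : e + 1 < P
      · rw [hL, Nat.mod_eq_of_lt h2, hxn, hψ]
        simp only []
        rw [if_pos (by omega)]
        omega
      · have heq : e + 1 = P := by omega
        rw [hL, heq, Nat.mod_self, hxn, hψ]
        simp only []
        rw [if_neg (by omega)]
        have : N₀ + e + 1 - N₀ = P := by omega
        rw [this, Nat.mod_self]
  have hmemiff : ∀ n, ψ n ∈ S ↔ n ∈ S := by
    intro n
    by_cases h1 : n < N₀ + P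
    · rw [show ψ n = n from if_pos h1]
    · push_neg at h1
      have hxn : ψ n = N₀ + (n - N₀) % P := if_neg (by omega)
      have hdiv : P * ((n - N₀) / P) + (n - N₀) % P = n - N₀ := Nat.div_add_mod _ _
      set t := (n - N₀) / P with ht
      set e := (n - N₀) % P with he
      have heq : N₀ + e + t * P = n := by
        have : N₀ + e + t * P = N₀ + (P * t + e) := by ring
        rw [this, hdiv]
        omega
      have := hper t (N₀ + e) (by omega)
      rw [heq] at this
      rw [hxn, ← this]
  set M : DFA Unit (Fin (N₀ + P)) :=
    { step := fun q _ => ⟨ψ (q.1 + 1), hψlt _⟩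
      start := ⟨ψ 0, hψlt _⟩
      accept := {q | (q : ℕ) ∈ S} } with hM
  refine ⟨Fin (N₀ + P), inferInstance, M, ?_⟩
  have heval : ∀ x : List Unit, M.eval x = ⟨ψ x.length, hψlt _⟩ := by
    intro x
    induction x using List.reverseRecOn with
    | nil => rfl
    | append_singleton x a ih =>
      rw [DFA.eval_append_singleton, ih]
      apply Fin.ext
      simp only [hM, List.length_append, List.length_singleton]
      exact (hψstep x.length).symm
  ext x
  rw [DFA.mem_accepts, heval]
  show ψ x.length ∈ S ↔ _
  rw [hmemiff]
  rfl
end LenPump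

open LenPump in
/-- If L is context-free and h is the morphism sending every letter to a single
letter (so h(w) = a^{|w|}), then h(L) is regular. Here the unary alphabet is
modeled by the type Unit. -/
theorem lengthImage_of_contextFree_isRegular {A : Type*} (L : Language A)
    (hL : L.IsContextFree) :
    Language.IsRegular
      {x : List Unit | ∃ w ∈ L, x = List.replicate w.length ()} := by
  classical
  obtain ⟨g, hg⟩ := hL
  obtain ⟨p, P, hP, hcl⟩ := pump g
  have hSeq : {n : ℕ | ∃ w ∈ L, w.length = n} = {n | LS g g.initial n} := by
    ext n
    constructor
    · rintro ⟨w, hw, rfl⟩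
      rw [← hg] at hw
      obtain ⟨h, ws, hjoin, hf⟩ := forall₂_of_derives (g := g)
        (ContextFreeGrammar.mem_language_iff g w |>.mp hw)
      rcases List.forall₂_cons_left_iff.mp hf with ⟨w₀, ws', hw₀, hnil, rfl⟩
      rw [List.forall₂_nil_left_iff] at hnil
      subst hnil
      exact ⟨w, h, by rw [hjoin]; simpa using hw₀, rfl⟩
    · rintro ⟨w, h, hw, rfl⟩
      refine ⟨w, ?_, rfl⟩
      rw [← hg]
      exact (ContextFreeGrammar.mem_language_iff g w).mpr hw.derives
  have hset : {x : List Unit | ∃ w ∈ L, x = List.replicate w.length ()} =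
      {x : List Unit | x.length ∈ {n : ℕ | ∃ w ∈ L, w.length = n}} := by
    ext x
    simp only [Set.mem_setOf_eq]
    constructor
    · rintro ⟨w, hw, rfl⟩
      exact ⟨w, hw, by simp⟩
    · rintro ⟨w, hw, hlen⟩
      refine ⟨w, hw, ?_⟩
      rw [hlen]
      exact List.eq_replicate_length.mpr fun b _ => rfl
  rw [hset]
  refine unary_regular _ p P hP ?_
  intro n hn hp
  rw [hSeq] at hn ⊢
  exact hcl n hn hp
end

section
/- Let T be a Turing machine and let S_H be the one-sided column subshift over alphabet Q' = A ⊔ (A × Q) obtained by observing cell 0 of the moving-head system T_H. If z ∈ S_H is a periodic word of period p in which the head (a letter from A × Q) occurs infinitely often, then z is isolated in S_H; more precisely, the cylinder of length |Q|·|A|^{p+1}·(p+1)^2 + 1 around z contains only z. -/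
namespace TuringMachine

variable {A Q : Type*}

/-- Alphabet of the moving-head system: a tape letter, or a tape letter marked
with the head together with its state. -/
abbrev Cell (A Q : Type*) := A ⊕ (A × Q)

/-- A cell carries the head. -/
def isHead {A Q : Type*} (b : Cell A Q) : Prop := ∃ p : A × Q, b = Sum.inr p

/-- Membership in the moving-head phase space X_H: at most one marked cell. -/
def XHmem (x : ℤ → Cell A Q) : Prop :=
  Set.Subsingleton {i : ℤ | isHead (x i)}

/-- One step of the moving-head system T_H on (A ⊔ (A × Q))^ℤ: if there is a
head, apply the rule of the machine at the marked cell (write, change state, and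
move the mark by ±1); otherwise do nothing. -/
noncomputable def hstep (M : TuringMachine A Q) (x : ℤ → Cell A Q) :
    ℤ → Cell A Q := by
  classical
  exact if h : ∃ i : ℤ, ∃ b : A, ∃ q : Q, x i = Sum.inr (b, q) then
    let i := h.choose
    let b := h.choose_spec.choose
    let q := h.choose_spec.choose_spec.choose
    let r := M.δ b q
    let y := Function.update x i (Sum.inl r.1)
    let j := i + dir r.2.2
    Function.update y j
      (match y j with
        | Sum.inl c => Sum.inr (c, r.2.1)
        | Sum.inr (c, _) => Sum.inr (c, r.2.1))
  else x

/-- The column observed at cell 0, defining the subshift S_H. -/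
noncomputable def tauH (M : TuringMachine A Q) (x : ℤ → Cell A Q) (t : ℕ) :
    Cell A Q :=
  ((M.hstep)^[t] x) 0

/-- The language of finite factors of the column subshift S_H. -/
noncomputable def langSH (M : TuringMachine A Q) : Language (Cell A Q) :=
  {w : List (Cell A Q) | ∃ x : ℤ → Cell A Q, XHmem x ∧ ∃ m : ℕ,
    ∀ j : ℕ, ∀ hj : j < w.length, w.get ⟨j, hj⟩ = M.tauH x (m + j)}

end TuringMachine

namespace TuringMachine

variable {A Q : Type*}

/-- Embed a classical configuration as a moving-head configuration. -/
def emb (c : Config A Q) : ℤ → Cell A Q :=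
  fun j => if j = c.2.2 then Sum.inr (c.1 j, c.2.1) else Sum.inl (c.1 j)

lemma emb_pos (c : Config A Q) : emb c c.2.2 = Sum.inr (c.1 c.2.2, c.2.1) := if_pos rfl

lemma emb_ne (c : Config A Q) {j : ℤ} (h : j ≠ c.2.2) : emb c j = Sum.inl (c.1 j) := if_neg h

lemma dir_ne_zero (b : Bool) : dir b ≠ 0 := by cases b <;> simp [dir]

lemma abs_dir (b : Bool) : |dir b| = 1 := by cases b <;> simp [dir]

lemma hstep_spec (M : TuringMachine A Q) (x : ℤ → Cell A Q)
    (hex : ∃ i : ℤ, ∃ b : A, ∃ q : Q, x i = Sum.inr (b, q)) :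
    ∃ (i : ℤ) (b : A) (q : Q), x i = Sum.inr (b, q) ∧
      M.hstep x =
        Function.update (Function.update x i (Sum.inl (M.δ b q).1))
          (i + dir (M.δ b q).2.2)
          (match Function.update x i (Sum.inl (M.δ b q).1) (i + dir (M.δ b q).2.2) with
            | Sum.inl c => Sum.inr (c, (M.δ b q).2.1)
            | Sum.inr (c, _) => Sum.inr (c, (M.δ b q).2.1)) := by
  classical
  refine ⟨hex.choose, hex.choose_spec.choose, hex.choose_spec.choose_spec.choose,
    hex.choose_spec.choose_spec.choose_spec, ?_⟩
  unfold hstep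
  rw [dif_pos hex]

lemma hstep_of_no_head (M : TuringMachine A Q) (x : ℤ → Cell A Q)
    (hx : ¬ ∃ i : ℤ, ∃ b : A, ∃ q : Q, x i = Sum.inr (b, q)) : M.hstep x = x := by
  classical
  unfold hstep
  rw [dif_neg hx]

lemma hstep_emb (M : TuringMachine A Q) (c : Config A Q) :
    M.hstep (emb c) = emb (M.step c) := by
  obtain ⟨i, b, q, hspec, heq⟩ :=
    M.hstep_spec (emb c) ⟨c.2.2, c.1 c.2.2, c.2.1, emb_pos c⟩
  have hi : i = c.2.2 := by
    by_contra h
    rw [emb_ne c h] at hspec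
    exact absurd hspec (by simp)
  subst hi
  rw [emb_pos] at hspec
  have hb : c.1 c.2.2 = b := by injection hspec with h'; exact congrArg Prod.fst h'
  have hq : c.2.1 = q := by injection hspec with h'; exact congrArg Prod.snd h'
  subst hb hq
  rw [heq]
  funext k
  have hne : c.2.2 + dir (M.δ (c.1 c.2.2) c.2.1).2.2 ≠ c.2.2 := by
    have := dir_ne_zero (M.δ (c.1 c.2.2) c.2.1).2.2
    omega
  by_cases hk1 : k = c.2.2 + dir (M.δ (c.1 c.2.2) c.2.1).2.2
  · subst hk1
    rw [Function.update_self]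
    rw [Function.update_of_ne hne, emb_ne c hne]
    show _ = emb (M.step c) _
    unfold emb step
    simp [Function.update_of_ne hne]
  · rw [Function.update_of_ne hk1]
    by_cases hk2 : k = c.2.2
    · subst hk2
      rw [Function.update_self]
      show _ = emb (M.step c) _
      unfold emb step
      simp [Function.update, fun h => hk1 h]
    · rw [Function.update_of_ne hk2, emb_ne c hk2]
      show _ = emb (M.step c) _
      unfold emb step
      simp [Function.update_of_ne hk2, fun h => hk1 h]

lemma hstep_iterate_emb (M : TuringMachine A Q) (c : Config A Q) (t : ℕ) :
    (M.hstep)^[t] (emb c) = emb ((M.step)^[t] c) := by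
  induction t with
  | zero => rfl
  | succ n ih =>
    rw [Function.iterate_succ_apply', ih, hstep_emb, Function.iterate_succ_apply']

lemma tauH_emb (M : TuringMachine A Q) (c : Config A Q) (t : ℕ) :
    M.tauH (emb c) t = emb ((M.step)^[t] c) 0 := by
  unfold tauH; rw [hstep_iterate_emb]

lemma pos_step_abs (M : TuringMachine A Q) (c : Config A Q) :
    |(M.step c).2.2 - c.2.2| = 1 := by
  show |c.2.2 + dir _ - c.2.2| = 1
  rw [add_sub_cancel_left]
  exact abs_dir _

lemma pos_iterate_abs (M : TuringMachine A Q) (c : Config A Q) (s n : ℕ) :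
    |((M.step)^[s + n] c).2.2 - ((M.step)^[s] c).2.2| ≤ (n : ℤ) := by
  induction n with
  | zero => simp
  | succ n ih =>
    have h1 := M.pos_step_abs ((M.step)^[s + n] c)
    rw [← Function.iterate_succ_apply' M.step (s+n) c] at h1
    have h2 : s + (n + 1) = (s + n) + 1 := by omega
    rw [h2]
    calc |((M.step)^[(s+n)+1] c).2.2 - ((M.step)^[s] c).2.2|
        ≤ |((M.step)^[(s+n)+1] c).2.2 - ((M.step)^[s+n] c).2.2|
          + |((M.step)^[s+n] c).2.2 - ((M.step)^[s] c).2.2| := abs_sub_le _ _ _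
      _ ≤ 1 + n := by rw [h1]; linarith
      _ = ((n + 1 : ℕ) : ℤ) := by push_cast; ring

lemma pos_abs_le (M : TuringMachine A Q) (c : Config A Q) {s t : ℕ} (h : s ≤ t) :
    |((M.step)^[t] c).2.2 - ((M.step)^[s] c).2.2| ≤ (t : ℤ) - s := by
  obtain ⟨n, rfl⟩ := Nat.exists_eq_add_of_le h
  have := M.pos_iterate_abs c s n
  push_cast
  linarith

/-- Agreement of two configurations on the window `[-h, h]`. -/
def agreeW (h : ℕ) (c d : Config A Q) : Prop :=
  (∀ j : ℤ, |j| ≤ (h : ℤ) → c.1 j = d.1 j) ∧ c.2.1 = d.2.1 ∧ c.2.2 = d.2.2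

lemma agreeW_step (M : TuringMachine A Q) {h : ℕ} {c d : Config A Q}
    (hcd : agreeW h c d) (hpos : |c.2.2| ≤ (h : ℤ)) :
    agreeW h (M.step c) (M.step d) := by
  obtain ⟨ht, hs, hp⟩ := hcd
  have hread : c.1 c.2.2 = d.1 d.2.2 := by rw [← hp]; exact ht c.2.2 hpos
  unfold step
  refine ⟨?_, ?_, ?_⟩
  · intro j hj
    show Function.update c.1 c.2.2 _ j = Function.update d.1 d.2.2 _ j
    rw [← hp, ← ht c.2.2 hpos, ← hs]
    by_cases hjc : j = c.2.2
    · subst hjc; rw [Function.update_self, Function.update_self]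
    · rw [Function.update_of_ne hjc, Function.update_of_ne hjc]; exact ht j hj
  · show (M.δ (c.1 c.2.2) c.2.1).2.1 = (M.δ (d.1 d.2.2) d.2.1).2.1
    rw [hread, hs]
  · show c.2.2 + dir (M.δ (c.1 c.2.2) c.2.1).2.2 = d.2.2 + dir (M.δ (d.1 d.2.2) d.2.1).2.2
    rw [hread, hs, hp]

lemma emb_zero_eq_of_agreeW {h : ℕ} {c d : Config A Q} (hcd : agreeW h c d) :
    emb c 0 = emb d 0 := by
  obtain ⟨ht, hs, hp⟩ := hcd
  unfold emb
  rw [hp, hs, ht 0 (by simp)]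

lemma pos_eq_zero_of_emb (c : Config A Q) (pr : A × Q) (h : emb c 0 = Sum.inr pr) :
    c.2.2 = 0 := by
  by_contra hne
  rw [emb_ne c (fun hh => hne hh.symm)] at h
  exact absurd h (by simp)

end TuringMachine

/-- A periodic column word of S_H in which the head occurs infinitely often is
isolated: the cylinder of length $|Q|·|A|^{p+1}·(p+1)^2 + 1$ around it contains
no other point of S_H. -/
theorem periodic_column_with_head_isolated
    {A Q : Type*} [Fintype A] [Fintype Q]
    (M : TuringMachine A Q) (z : ℕ → TuringMachine.Cell A Q) (p : ℕ)
    (hp : 0 < p) (hper : ∀ t : ℕ, z (t + p) = z t)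
    (hhead : ∀ t : ℕ, ∃ s : ℕ, t ≤ s ∧ TuringMachine.isHead (z s))
    (hz : ∃ x : ℤ → TuringMachine.Cell A Q,
      TuringMachine.XHmem x ∧ ∀ t : ℕ, M.tauH x t = z t) :
    ∀ z' : ℕ → TuringMachine.Cell A Q,
      (∃ x : ℤ → TuringMachine.Cell A Q,
        TuringMachine.XHmem x ∧ ∀ t : ℕ, M.tauH x t = z' t) →
      (∀ t ≤ Fintype.card Q * Fintype.card A ^ (p + 1) * (p + 1) ^ 2,
        z' t = z t) →
      z' = z := by
  classical
  intro z' hz' hagree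
  obtain ⟨x', hx'mem, hx'col⟩ := hz'
  set N := Fintype.card Q * Fintype.card A ^ (p + 1) * (p + 1) ^ 2 with hNdef
  set B := Fintype.card Q * Fintype.card A ^ (p + 1) * (p + 1) with hBdef
  -- periodicity with arbitrary multiples of the period
  have hperk : ∀ k t : ℕ, z (t + k * p) = z t := by
    intro k
    induction k with
    | zero => intro t; simp
    | succ k ih =>
      intro t
      have h1 : t + (k + 1) * p = (t + k * p) + p := by ring
      rw [h1, hper, ih]
  -- a head time t0 < p
  obtain ⟨s, -, hsh⟩ := hhead 0
  obtain ⟨⟨a0, q0⟩, hs0⟩ := hsh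
  set t0 := s % p with ht0def
  have ht0p : t0 < p := Nat.mod_lt _ hp
  have hzt0 : z t0 = Sum.inr (a0, q0) := by
    have h1 : t0 + (s / p) * p = s := by rw [ht0def, Nat.mod_add_div']
    rw [← hperk (s / p) t0, h1]
    exact hs0
  have hA : 1 ≤ Fintype.card A := Fintype.card_pos_iff.mpr ⟨a0⟩
  have hQ : 1 ≤ Fintype.card Q := Fintype.card_pos_iff.mpr ⟨q0⟩
  have hBp : p + 1 ≤ B := by
    calc p + 1 = 1 * 1 * (p + 1) := by ring
      _ ≤ Fintype.card Q * Fintype.card A ^ (p + 1) * (p + 1) :=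
          Nat.mul_le_mul_right _ (Nat.mul_le_mul hQ (Nat.one_le_pow _ _ hA))
      _ = B := by rw [hBdef]
  have hNB : N = B * p + B := by rw [hNdef, hBdef]; ring
  have hBpN : t0 + B * p ≤ N := by omega
  -- x' carries a head
  have hhead' : ∃ i : ℤ, ∃ b : A, ∃ q : Q, x' i = Sum.inr (b, q) := by
    by_contra hno
    have hfix : ∀ t : ℕ, (M.hstep)^[t] x' = x' := fun t =>
      Function.iterate_fixed (M.hstep_of_no_head x' hno) t
    have h1 : z' t0 = Sum.inr (a0, q0) := by
      rw [hagree t0 (by omega), hzt0]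
    have h2 : x' 0 = Sum.inr (a0, q0) := by
      rw [← h1, ← hx'col t0]
      unfold TuringMachine.tauH
      rw [hfix]
    exact hno ⟨0, a0, q0, h2⟩
  obtain ⟨i0, b0, qq0, hib⟩ := hhead'
  -- extract the underlying classical configuration
  obtain ⟨c', hx'emb⟩ : ∃ c' : TuringMachine.Config A Q,
      x' = TuringMachine.emb c' := by
    refine ⟨(fun j => Sum.elim id Prod.fst (x' j), qq0, i0), funext fun k => ?_⟩
    show x' k = TuringMachine.emb _ k
    unfold TuringMachine.emb
    by_cases hk : k = i0
    · subst hk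
      rw [if_pos rfl]
      simp [hib]
    · rw [if_neg hk]
      have hnh : ∀ pr : A × Q, x' k ≠ Sum.inr pr := by
        intro pr hpr
        exact hk (hx'mem (show k ∈ {i : ℤ | TuringMachine.isHead (x' i)} from ⟨pr, hpr⟩)
          ⟨(b0, qq0), hib⟩)
      cases hxk : x' k with
      | inl a => simp [hxk]
      | inr pr => exact absurd hxk (hnh pr)
  have hcol : ∀ t : ℕ, z' t = TuringMachine.emb ((M.step)^[t] c') 0 := by
    intro t
    rw [← hx'col t, hx'emb, TuringMachine.tauH_emb]
  -- visits of the head at cell 0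
  have hvisit : ∀ k : ℕ, t0 + k * p ≤ N → ((M.step)^[t0 + k * p] c').2.2 = 0 := by
    intro k hk
    have h1 : z' (t0 + k * p) = Sum.inr (a0, q0) := by rw [hagree _ hk, hperk, hzt0]
    rw [hcol] at h1
    exact TuringMachine.pos_eq_zero_of_emb _ _ h1
  -- confinement of the head to the window
  have hwin : ∀ t : ℕ, t0 ≤ t → t ≤ t0 + B * p →
      |((M.step)^[t] c').2.2| ≤ ((p / 2 : ℕ) : ℤ) := by
    intro t htl htr
    set k := (t - t0) / p with hkdef
    set r := (t - t0) % p with hrdef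
    have hdm : k * p + r = t - t0 := by
      rw [hkdef, hrdef, Nat.mul_comm]; exact Nat.div_add_mod _ _
    have hrp : r < p := Nat.mod_lt _ hp
    have ht_eq : t = t0 + k * p + r := by omega
    by_cases hint : k + 1 ≤ B
    · have hm1 : k * p ≤ B * p := Nat.mul_le_mul_right p (by omega)
      have hm2 : (k + 1) * p ≤ B * p := Nat.mul_le_mul_right p hint
      have hmul : (k + 1) * p = k * p + p := by ring
      have hv1 : ((M.step)^[t0 + k * p] c').2.2 = 0 := hvisit k (by omega)
      have hv2 : ((M.step)^[t0 + (k + 1) * p] c').2.2 = 0 := hvisit (k + 1) (by omega)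
      have d1 := M.pos_abs_le c' (s := t0 + k * p) (t := t) (by omega)
      have d2 := M.pos_abs_le c' (s := t) (t := t0 + (k + 1) * p) (by omega)
      rw [hv1, sub_zero] at d1
      rw [hv2, zero_sub, abs_neg] at d2
      have hcast1 : ((t0 + k * p : ℕ) : ℤ) + r = (t : ℤ) := by
        push_cast; omega
      have hcast2 : ((t0 + (k + 1) * p : ℕ) : ℤ) = (t : ℤ) + (p - r : ℤ) := by
        push_cast; push_cast at hcast1; linarith [hcast1]
      have e1 : |((M.step)^[t] c').2.2| ≤ (r : ℤ) := by omega
      have e2 : |((M.step)^[t] c').2.2| ≤ (p : ℤ) - r := by omega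
      have := abs_nonneg ((M.step)^[t] c').2.2
      omega
    · -- k ≥ B : forces t to be exactly the last visit
      have hm1 : B * p ≤ k * p := Nat.mul_le_mul_right p (by omega)
      have hteq : t = t0 + k * p ∧ k * p = B * p := by omega
      have hv1 : ((M.step)^[t0 + k * p] c').2.2 = 0 := hvisit k (by omega)
      rw [hteq.1, hv1, abs_zero]
      positivity
  -- pigeonhole on window contents at visit times
  set W : Finset ℤ := Finset.Icc (-((p / 2 : ℕ) : ℤ)) ((p / 2 : ℕ) : ℤ) with hWdef
  have hWcard : W.card = 2 * (p / 2) + 1 := by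
    rw [hWdef, Int.card_Icc]
    omega
  set F : Fin (B + 1) → ((↥W → A) × Q) := fun k =>
    ((fun j : ↥W => ((M.step)^[t0 + k.1 * p] c').1 j.1),
      ((M.step)^[t0 + k.1 * p] c').2.1) with hFdef
  have hcardlt : Fintype.card ((↥W → A) × Q) < Fintype.card (Fin (B + 1)) := by
    rw [Fintype.card_prod, Fintype.card_fun, Fintype.card_coe, hWcard, Fintype.card_fin]
    have h1 : Fintype.card A ^ (2 * (p / 2) + 1) ≤ Fintype.card A ^ (p + 1) :=
      Nat.pow_le_pow_right hA (by omega)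
    calc Fintype.card A ^ (2 * (p / 2) + 1) * Fintype.card Q
        ≤ Fintype.card A ^ (p + 1) * Fintype.card Q := Nat.mul_le_mul_right _ h1
      _ = Fintype.card Q * Fintype.card A ^ (p + 1) * 1 := by ring
      _ ≤ Fintype.card Q * Fintype.card A ^ (p + 1) * (p + 1) :=
          Nat.mul_le_mul_left _ (by omega)
      _ = B := by rw [hBdef]
      _ < B + 1 := Nat.lt_succ_self B
  obtain ⟨k1, k2, hk12, hFeq12⟩ := Fintype.exists_ne_map_eq_of_card_lt F hcardlt
  obtain ⟨k, l, hkl, hFeq⟩ : ∃ k l : Fin (B + 1), k.1 < l.1 ∧ F k = F l := by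
    rcases lt_or_gt_of_ne hk12 with h | h
    · exact ⟨k1, k2, h, hFeq12⟩
    · exact ⟨k2, k1, h, hFeq12.symm⟩
  set s1 := t0 + k.1 * p with hs1def
  set q := (l.1 - k.1) * p with hqdef
  have hqpos : 0 < q := by
    rw [hqdef]; exact Nat.mul_pos (by omega) hp
  have hlB : l.1 ≤ B := Nat.lt_succ_iff.mp l.isLt
  have hkB : k.1 ≤ B := Nat.lt_succ_iff.mp k.isLt
  have hkpBp : k.1 * p ≤ B * p := Nat.mul_le_mul_right p hkB
  have hlpBp : l.1 * p ≤ B * p := Nat.mul_le_mul_right p hlB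
  have hs1q : s1 + q = t0 + l.1 * p := by
    rw [hs1def, hqdef]
    have : (l.1 - k.1) * p + k.1 * p = l.1 * p := by
      rw [← Nat.add_mul, Nat.sub_add_cancel (le_of_lt hkl)]
    omega
  have hs1N : s1 ≤ N := by omega
  have hs1qN : s1 + q ≤ N := by omega
  have hbase : TuringMachine.agreeW (p / 2) ((M.step)^[s1] c') ((M.step)^[s1 + q] c') := by
    rw [hs1q]
    refine ⟨?_, ?_, ?_⟩
    · intro j hj
      have hjW : j ∈ W := by
        rw [hWdef, Finset.mem_Icc]
        constructor <;> [exact neg_le_of_abs_le hj; exact le_of_abs_le hj]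
      exact congrFun (congrArg Prod.fst hFeq) ⟨j, hjW⟩
    · exact congrArg Prod.snd hFeq
    · rw [hvisit k.1 (by omega), hvisit l.1 (by omega)]
  -- the main intertwined induction
  have main : ∀ n : ℕ,
      TuringMachine.agreeW (p / 2) ((M.step)^[s1 + n] c') ((M.step)^[s1 + n + q] c') ∧
      |((M.step)^[s1 + n] c').2.2| ≤ ((p / 2 : ℕ) : ℤ) := by
    intro n
    induction n using Nat.strong_induction_on with
    | _ n IH =>
      cases n with
      | zero =>
        refine ⟨by simpa using hbase, ?_⟩
        have h0 : ((M.step)^[s1] c').2.2 = 0 := hvisit k.1 (by omega)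
        simpa [h0] using (by positivity : (0 : ℤ) ≤ ((p / 2 : ℕ) : ℤ))
      | succ m =>
        obtain ⟨ihA, ihW⟩ := IH m (Nat.lt_succ_self m)
        have hstep1 : (M.step)^[s1 + (m + 1)] c' = M.step ((M.step)^[s1 + m] c') := by
          rw [show s1 + (m + 1) = (s1 + m) + 1 by omega, Function.iterate_succ_apply']
        have hstep2 : (M.step)^[s1 + (m + 1) + q] c' = M.step ((M.step)^[s1 + m + q] c') := by
          rw [show s1 + (m + 1) + q = (s1 + m + q) + 1 by omega, Function.iterate_succ_apply']
        have hag : TuringMachine.agreeW (p / 2) ((M.step)^[s1 + (m + 1)] c')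
            ((M.step)^[s1 + (m + 1) + q] c') := by
          rw [hstep1, hstep2]
          exact M.agreeW_step ihA ihW
        refine ⟨hag, ?_⟩
        by_cases hle : s1 + (m + 1) ≤ t0 + B * p
        · exact hwin _ (by omega) hle
        · have hgt : q < m + 1 := by omega
          obtain ⟨ihA', ihW'⟩ := IH (m + 1 - q) (by omega)
          have heq2 : s1 + (m + 1 - q) + q = s1 + (m + 1) := by omega
          rw [← heq2, ← ihA'.2.2]
          exact ihW'
  -- eventual periodicity of z'
  have hper' : ∀ t : ℕ, s1 ≤ t → z' (t + q) = z' t := by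
    intro t hts
    obtain ⟨n, rfl⟩ := Nat.exists_eq_add_of_le hts
    rw [hcol, hcol]
    exact (TuringMachine.emb_zero_eq_of_agreeW (main n).1).symm
  have hzq : ∀ t : ℕ, z (t + q) = z t := by
    intro t
    rw [hqdef]
    exact hperk _ _
  -- conclusion
  funext t
  induction t using Nat.strong_induction_on with
  | _ t IH =>
    by_cases ht : t ≤ N
    · exact hagree t ht
    · have h2 : t - q < t := by omega
      have h3 : s1 ≤ t - q := by omega
      have h4 : t - q + q = t := by omega
      calc z' t = z' (t - q + q) := by rw [h4]
        _ = z' (t - q) := hper' _ h3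
        _ = z (t - q) := IH _ h2
        _ = z (t - q + q) := (hzq _).symm
        _ = z t := by rw [h4]
end

section
/- Let T be a Turing machine with moving-head system T_H on the compact space X_H. If there exists N ∈ ℕ such that T makes no cycle of width greater than N (the head never returns to a cell i after having visited i+N or i−N, starting from i), then every configuration of X_H containing the head is an equicontinuity point of T_H. Quantitatively: if x ∈ X_H has its head within [-k,k], then any y agreeing with x on [-k-N, k+N] satisfies T_H^t(y) ∈ [T_H^t(x) restricted to [-k,k]] for all t ≥ 0. -/
namespace TuringMachine

variable {A Q : Type*}

/-- Embed a machine configuration into the moving-head phase space. -/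
def embed (c : Config A Q) : ℤ → Cell A Q :=
  fun j => if j = c.2.2 then Sum.inr (c.1 j, c.2.1) else Sum.inl (c.1 j)

lemma embed_XHmem (c : Config A Q) : XHmem (embed c) := by
  intro i hi j hj
  simp only [Set.mem_setOf_eq, isHead, embed] at hi hj
  obtain ⟨p, hp⟩ := hi
  obtain ⟨p', hp'⟩ := hj
  by_cases h1 : i = c.2.2
  · by_cases h2 : j = c.2.2
    · omega
    · simp [h2] at hp'
  · simp [h1] at hp

lemma hstep_embed (M : TuringMachine A Q) (c : Config A Q) :
    M.hstep (embed c) = embed (M.step c) := by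
  classical
  have h : ∃ i : ℤ, ∃ b : A, ∃ q : Q, embed c i = Sum.inr (b, q) :=
    ⟨c.2.2, c.1 c.2.2, c.2.1, by simp [embed]⟩
  unfold hstep
  rw [dif_pos h]
  have hspec := h.choose_spec.choose_spec.choose_spec
  generalize hC : h.choose_spec.choose_spec.choose = q0 at hspec ⊢
  generalize hB : h.choose_spec.choose = b0 at hspec ⊢
  generalize hA : h.choose = i0 at hspec ⊢
  have hi : i0 = c.2.2 := by
    by_contra hne
    simp [embed, hne] at hspec
  rw [hi] at hspec
  simp [embed] at hspec
  obtain ⟨hb, hq⟩ := hspec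
  subst hi; rw [← hb, ← hq]
  simp only
  funext j
  set r := M.δ b0 q0 with hr
  have hdir : dir r.2.2 = 1 ∨ dir r.2.2 = -1 := by
    unfold dir; by_cases hb2 : r.2.2 <;> simp [hb2]
  have hne : c.2.2 + dir r.2.2 ≠ c.2.2 := by omega
  by_cases h1 : j = c.2.2 + dir r.2.2
  · subst h1
    simp [step, embed, Function.update_apply, hne, ← hr, hb, hq]
  · by_cases h2 : j = c.2.2
    · subst h2
      simp [step, embed, Function.update_apply, Ne.symm hne, h1, ← hr, hb, hq]
    · simp [step, embed, Function.update_apply, h1, h2, ← hr, hb, hq]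

lemma hstep_iter_embed (M : TuringMachine A Q) (c : Config A Q) (t : ℕ) :
    (M.hstep)^[t] (embed c) = embed ((M.step)^[t] c) := by
  induction t with
  | zero => rfl
  | succ t ih => rw [Function.iterate_succ_apply', ih, hstep_embed,
      Function.iterate_succ_apply']

end TuringMachine
namespace TuringMachine

variable {A Q : Type*}

lemma pos_zero (M : TuringMachine A Q) (c : Config A Q) : M.pos 0 c = c.2.2 := rfl

lemma pos_succ (M : TuringMachine A Q) (c : Config A Q) (t : ℕ) :
    M.pos (t + 1) c = M.pos t c + 1 ∨ M.pos (t + 1) c = M.pos t c - 1 := by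
  unfold pos
  rw [Function.iterate_succ_apply']
  set d := (M.step)^[t] c
  show (M.step d).2.2 = d.2.2 + 1 ∨ (M.step d).2.2 = d.2.2 - 1
  unfold step dir
  by_cases hb : (M.δ (d.1 d.2.2) d.2.1).2.2 <;> simp [hb] <;> omega

/-- Discrete intermediate value theorem, upward version. -/
lemma ivt_up (g : ℕ → ℤ) (hg : ∀ n, g (n + 1) = g n + 1 ∨ g (n + 1) = g n - 1)
    (a n : ℕ) (v : ℤ) (h1 : g a ≤ v) (h2 : v ≤ g (a + n)) :
    ∃ s, a ≤ s ∧ s ≤ a + n ∧ g s = v := by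
  induction n generalizing a with
  | zero => exact ⟨a, le_refl a, le_refl a, le_antisymm h1 h2⟩
  | succ n ih =>
    by_cases h : g (a + 1) ≤ v
    · obtain ⟨s, hs1, hs2, hs3⟩ := ih (a + 1) h (by rw [Nat.add_right_comm]; exact h2)
      exact ⟨s, by omega, by omega, hs3⟩
    · push_neg at h
      have := hg a
      exact ⟨a, le_rfl, by omega, by omega⟩

/-- Discrete intermediate value theorem, downward version. -/
lemma ivt_down (g : ℕ → ℤ) (hg : ∀ n, g (n + 1) = g n + 1 ∨ g (n + 1) = g n - 1)
    (a n : ℕ) (v : ℤ) (h1 : v ≤ g a) (h2 : g (a + n) ≤ v) :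
    ∃ s, a ≤ s ∧ s ≤ a + n ∧ g s = v := by
  obtain ⟨s, hs1, hs2, hs3⟩ := ivt_up (fun n => -g n)
    (fun n => by rcases hg n with h | h <;> simp [h] <;> omega)
    a n (-v) (by simpa using neg_le_neg h1) (by simpa using neg_le_neg h2)
  exact ⟨s, hs1, hs2, by omega⟩

/-- Two configurations with the same head data and tapes agreeing on a region
stay synchronized as long as the head stays in the region. -/
lemma sync (M : TuringMachine A Q) (c c' : Config A Q) (R : ℤ → Prop)
    (hq : c.2.1 = c'.2.1) (hp : c.2.2 = c'.2.2)
    (htape : ∀ j, R j → c.1 j = c'.1 j) (t : ℕ)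
    (hpos : ∀ s, s < t → R (M.pos s c)) :
    ((M.step)^[t] c).2.1 = ((M.step)^[t] c').2.1 ∧
    ((M.step)^[t] c).2.2 = ((M.step)^[t] c').2.2 ∧
    ∀ j, R j → ((M.step)^[t] c).1 j = ((M.step)^[t] c').1 j := by
  induction t with
  | zero => exact ⟨hq, hp, htape⟩
  | succ t ih =>
    obtain ⟨hq', hp', ht'⟩ := ih (fun s hs => hpos s (Nat.lt_succ_of_lt hs))
    rw [Function.iterate_succ_apply', Function.iterate_succ_apply']
    set d := (M.step)^[t] c with hd
    set d' := (M.step)^[t] c' with hd'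
    have hR : R d.2.2 := hpos t (Nat.lt_succ_self t)
    have hread : d.1 d'.2.2 = d'.1 d'.2.2 := by rw [← hp']; exact ht' _ hR
    unfold step
    refine ⟨by rw [hp', hread, hq'], by rw [hp', hread, hq'], ?_⟩
    intro j hj
    simp only [Function.update_apply, hp', hread, hq']
    by_cases hc : j = d'.2.2
    · simp [hc]
    · simp [hc, ht' j hj]

/-- Tape cells away from the head are frozen. -/
lemma tape_frozen (M : TuringMachine A Q) (c : Config A Q) (j : ℤ) (s t : ℕ)
    (hst : s ≤ t) (h : ∀ u, s ≤ u → u < t → M.pos u c ≠ j) :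
    ((M.step)^[t] c).1 j = ((M.step)^[s] c).1 j := by
  induction t with
  | zero => simp [Nat.le_zero.mp hst]
  | succ t ih =>
    rcases Nat.lt_or_ge s (t + 1) with hlt | hge
    · have hs : s ≤ t := by omega
      rw [Function.iterate_succ_apply']
      have hj : M.pos t c ≠ j := h t hs (by omega)
      have : (M.step ((M.step)^[t] c)).1 j = ((M.step)^[t] c).1 j := by
        unfold step
        exact Function.update_of_ne (Ne.symm hj) _ _
      rw [this]
      exact ih hs (fun u hu1 hu2 => h u hu1 (by omega))
    · have : s = t + 1 := by omega
      rw [this]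

end TuringMachine
namespace TuringMachine

variable {A Q : Type*}

lemma embed_congr (d d' : Config A Q) (hq : d.2.1 = d'.2.1) (hp : d.2.2 = d'.2.2)
    (j : ℤ) (ht : d.1 j = d'.1 j) : embed d j = embed d' j := by
  simp [embed, hq, hp, ht]

lemma eq_embed_of_head (x : ℤ → Cell A Q) (hx : XHmem x) (i : ℤ) (p : A × Q)
    (hxi : x i = Sum.inr p) :
    x = embed (fun j => match x j with | .inl a => a | .inr pa => pa.1, p.2, i) := by
  funext j
  by_cases hji : j = i
  · subst hji; simp [embed, hxi]
  · have hni : ∀ pa : A × Q, x j ≠ Sum.inr pa := by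
      intro pa hpa
      exact hji (hx ⟨pa, hpa⟩ ⟨p, hxi⟩)
    rcases hxj : x j with a | pa
    · simp [embed, hji, hxj]
    · exact absurd hxj (hni pa)

/-- The head never returns to `[-k,k]` after leaving `[-k-N, k+N]`. -/
lemma no_return (M : TuringMachine A Q) (N : ℕ)
    (hcyc : ∀ (x : Config A Q) (i : ℤ) (W : ℕ) (t₁ t₂ : ℕ),
      N < W → 0 < t₁ → t₁ < t₂ → x.2.2 = i →
      (M.pos t₁ x = i + W ∨ M.pos t₁ x = i - W) → M.pos t₂ x ≠ i)
    (k : ℕ) (c : Config A Q) (hi : |c.2.2| ≤ (k : ℤ))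
    (s t : ℕ) (hst : s ≤ t) (hs : (k : ℤ) + N < |M.pos s c|)
    (ht : |M.pos t c| ≤ (k : ℤ)) : False := by
  have hstep : ∀ n, M.pos (n+1) c = M.pos n c + 1 ∨ M.pos (n+1) c = M.pos n c - 1 :=
    fun n => pos_succ M c n
  have hg0 : M.pos 0 c = c.2.2 := rfl
  obtain ⟨hi1, hi2⟩ := abs_le.mp hi
  obtain ⟨ht1, ht2⟩ := abs_le.mp ht
  have hposadd : ∀ (s₁ u : ℕ), M.pos u ((M.step)^[s₁] c) = M.pos (u + s₁) c := by
    intro s₁ u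
    show ((M.step)^[u] ((M.step)^[s₁] c)).2.2 = _
    rw [← Function.iterate_add_apply]
    rfl
  rcases le_or_gt 0 (M.pos s c) with hpos0 | hneg0
  · -- right excursion
    have hgs : (k:ℤ) + N < M.pos s c := by rwa [abs_of_nonneg hpos0] at hs
    set b : ℤ := max (M.pos 0 c) (M.pos t c) with hbdef
    have hbk : b ≤ (k:ℤ) := max_le (by rw [hg0]; omega) (by omega)
    obtain ⟨s₁, _, hs₁s, hgs₁⟩ := ivt_up (fun n => M.pos n c) hstep 0 s b
      (le_max_left _ _) (by show b ≤ M.pos (0 + s) c; rw [Nat.zero_add]; omega)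
    have hts : s + (t - s) = t := by omega
    obtain ⟨s₂, hss₂, hs₂t, hgs₂⟩ := ivt_down (fun n => M.pos n c) hstep s (t - s) b
      (by show b ≤ M.pos s c; omega) (by show M.pos (s + (t - s)) c ≤ b; rw [hts]; exact le_max_right _ _)
    have hgs₁' : M.pos s₁ c = b := hgs₁
    have hgs₂' : M.pos s₂ c = b := hgs₂
    have hs₁s' : s₁ ≤ s := by omega
    have hs₂t' : s₂ ≤ t := by omega
    have hs₁lt : s₁ < s := by
      have hne : s₁ ≠ s := by intro h; rw [h] at hgs₁'; omega
      omega
    have hs₂gt : s < s₂ := by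
      have hne : s₂ ≠ s := by intro h; rw [h] at hgs₂'; omega
      omega
    refine hcyc ((M.step)^[s₁] c) b ((M.pos s c - b).toNat) (s - s₁) (s₂ - s₁)
      (by omega) (by omega) (by omega) hgs₁' (Or.inl ?_) ?_
    · rw [hposadd, Nat.sub_add_cancel (le_of_lt hs₁lt)]; omega
    · rw [hposadd, Nat.sub_add_cancel (le_of_lt (hs₁lt.trans hs₂gt))]; exact hgs₂'
  · -- left excursion
    have hgs : M.pos s c < -((k:ℤ) + N) := by rw [abs_of_neg hneg0] at hs; omega
    set b : ℤ := min (M.pos 0 c) (M.pos t c) with hbdef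
    have hbk : -(k:ℤ) ≤ b := le_min (by rw [hg0]; omega) (by omega)
    obtain ⟨s₁, _, hs₁s, hgs₁⟩ := ivt_down (fun n => M.pos n c) hstep 0 s b
      (min_le_left _ _) (by show M.pos (0 + s) c ≤ b; rw [Nat.zero_add]; omega)
    have hts : s + (t - s) = t := by omega
    obtain ⟨s₂, hss₂, hs₂t, hgs₂⟩ := ivt_up (fun n => M.pos n c) hstep s (t - s) b
      (by show M.pos s c ≤ b; omega) (by show b ≤ M.pos (s + (t - s)) c; rw [hts]; exact min_le_right _ _)
    have hgs₁' : M.pos s₁ c = b := hgs₁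
    have hgs₂' : M.pos s₂ c = b := hgs₂
    have hs₁s' : s₁ ≤ s := by omega
    have hs₂t' : s₂ ≤ t := by omega
    have hs₁lt : s₁ < s := by
      have hne : s₁ ≠ s := by intro h; rw [h] at hgs₁'; omega
      omega
    have hs₂gt : s < s₂ := by
      have hne : s₂ ≠ s := by intro h; rw [h] at hgs₂'; omega
      omega
    refine hcyc ((M.step)^[s₁] c) b ((b - M.pos s c).toNat) (s - s₁) (s₂ - s₁)
      (by omega) (by omega) (by omega) hgs₁' (Or.inr ?_) ?_
    · rw [hposadd, Nat.sub_add_cancel (le_of_lt hs₁lt)]; omega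
    · rw [hposadd, Nat.sub_add_cancel (le_of_lt (hs₁lt.trans hs₂gt))]; exact hgs₂'

/-- Main quantitative lemma. -/
lemma main2 (M : TuringMachine A Q) (N : ℕ)
    (hcyc : ∀ (x : Config A Q) (i : ℤ) (W : ℕ) (t₁ t₂ : ℕ),
      N < W → 0 < t₁ → t₁ < t₂ → x.2.2 = i →
      (M.pos t₁ x = i + W ∨ M.pos t₁ x = i - W) → M.pos t₂ x ≠ i)
    (k : ℕ) (x : ℤ → Cell A Q) (hx : XHmem x)
    (hhead : ∃ i : ℤ, |i| ≤ (k : ℤ) ∧ isHead (x i))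
    (y : ℤ → Cell A Q) (hy : XHmem y)
    (hagree : ∀ i : ℤ, |i| ≤ (k : ℤ) + N → y i = x i)
    (t : ℕ) (j : ℤ) (hj : |j| ≤ (k : ℤ)) :
    ((M.hstep)^[t] y) j = ((M.hstep)^[t] x) j := by
  classical
  obtain ⟨i, hik, p, hxi⟩ := hhead
  have hyi : y i = Sum.inr p := by rw [hagree i (by omega)]; exact hxi
  set cx : Config A Q := (fun j => match x j with | .inl a => a | .inr pa => pa.1, p.2, i)
    with hcx
  set cy : Config A Q := (fun j => match y j with | .inl a => a | .inr pa => pa.1, p.2, i)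
    with hcy
  have hxe : x = embed cx := eq_embed_of_head x hx i p hxi
  have hye : y = embed cy := eq_embed_of_head y hy i p hyi
  have htape : ∀ j' : ℤ, |j'| ≤ (k : ℤ) + N → cx.1 j' = cy.1 j' := by
    intro j' hj'
    simp only [hcx, hcy, hagree j' hj']
  rw [hxe, hye, hstep_iter_embed, hstep_iter_embed]
  have hcx22 : |cx.2.2| ≤ (k : ℤ) := hik
  by_cases H : ∀ u, u ≤ t → |M.pos u cx| ≤ (k : ℤ) + N
  · obtain ⟨hq', hp', ht'⟩ := sync M cx cy (fun j' => |j'| ≤ (k : ℤ) + N)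
      rfl rfl htape t (fun u hu => H u (le_of_lt hu))
    exact (embed_congr _ _ hq' hp' j (ht' j (by omega))).symm
  · push_neg at H
    obtain ⟨u0, hu0t, hu0⟩ := H
    have hP : ∃ u, (k : ℤ) + N < |M.pos u cx| := ⟨u0, hu0⟩
    set s₀ := Nat.find hP with hs₀def
    have hs₀t : s₀ ≤ t := (Nat.find_min' hP hu0).trans hu0t
    have hmin : ∀ u, u < s₀ → |M.pos u cx| ≤ (k : ℤ) + N :=
      fun u hu => le_of_not_gt (Nat.find_min hP hu)
    have hout : (k : ℤ) + N < |M.pos s₀ cx| := Nat.find_spec hP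
    obtain ⟨hq0, hp0, ht0⟩ := sync M cx cy (fun j' => |j'| ≤ (k : ℤ) + N)
      rfl rfl htape s₀ hmin
    have houty : (k : ℤ) + N < |M.pos s₀ cy| := by
      rw [show M.pos s₀ cy = M.pos s₀ cx from hp0.symm]; exact hout
    have noretx : ∀ u, s₀ ≤ u → ¬(|M.pos u cx| ≤ (k : ℤ)) :=
      fun u hu hc => no_return M N hcyc k cx hcx22 s₀ u hu hout hc
    have norety : ∀ u, s₀ ≤ u → ¬(|M.pos u cy| ≤ (k : ℤ)) :=
      fun u hu hc => no_return M N hcyc k cy hik s₀ u hu houty hc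
    have frozenx : ((M.step)^[t] cx).1 j = ((M.step)^[s₀] cx).1 j :=
      tape_frozen M cx j s₀ t hs₀t
        (fun u hu1 _ he => noretx u hu1 (by rw [he]; exact hj))
    have frozeny : ((M.step)^[t] cy).1 j = ((M.step)^[s₀] cy).1 j :=
      tape_frozen M cy j s₀ t hs₀t
        (fun u hu1 _ he => norety u hu1 (by rw [he]; exact hj))
    have tape_eq : ((M.step)^[s₀] cx).1 j = ((M.step)^[s₀] cy).1 j := ht0 j (by omega)
    have hjx : j ≠ ((M.step)^[t] cx).2.2 := by
      intro he
      have hpe : M.pos t cx = j := he.symm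
      exact noretx t hs₀t (by rw [hpe]; exact hj)
    have hjy : j ≠ ((M.step)^[t] cy).2.2 := by
      intro he
      have hpe : M.pos t cy = j := he.symm
      exact norety t hs₀t (by rw [hpe]; exact hj)
    simp only [embed, if_neg hjx, if_neg hjy]
    rw [frozenx, frozeny, tape_eq]

end TuringMachine

/-- If the machine makes no cycle of width greater than N (the head never
returns to a cell i after having visited i+W or i−W for some W > N, starting
with the head on i), then every configuration of X_H containing the head is an
equicontinuity point of T_H; quantitatively, if the head of x lies in [-k,k],
any y agreeing with x on [-k-N, k+N] has the same trace on [-k,k] forever. -/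
theorem bounded_cycles_implies_equicontinuity_of_head_configs
    {A Q : Type*} [Fintype A] [Fintype Q]
    (M : TuringMachine A Q) (N : ℕ)
    (hcyc : ∀ (x : TuringMachine.Config A Q) (i : ℤ) (W : ℕ) (t₁ t₂ : ℕ),
      N < W → 0 < t₁ → t₁ < t₂ → x.2.2 = i →
      (M.pos t₁ x = i + W ∨ M.pos t₁ x = i - W) → M.pos t₂ x ≠ i) :
    (∀ x : ℤ → TuringMachine.Cell A Q, TuringMachine.XHmem x →
      (∃ i : ℤ, TuringMachine.isHead (x i)) →
      ∀ k : ℕ, ∃ m : ℕ, ∀ y : ℤ → TuringMachine.Cell A Q,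
        TuringMachine.XHmem y → (∀ i : ℤ, |i| ≤ (m : ℤ) → y i = x i) →
        ∀ t : ℕ, ∀ j : ℤ, |j| ≤ (k : ℤ) →
          ((M.hstep)^[t] y) j = ((M.hstep)^[t] x) j) ∧
    (∀ (k : ℕ) (x : ℤ → TuringMachine.Cell A Q), TuringMachine.XHmem x →
      (∃ i : ℤ, |i| ≤ (k : ℤ) ∧ TuringMachine.isHead (x i)) →
      ∀ y : ℤ → TuringMachine.Cell A Q, TuringMachine.XHmem y →
        (∀ i : ℤ, |i| ≤ (k : ℤ) + N → y i = x i) →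
        ∀ t : ℕ, ∀ j : ℤ, |j| ≤ (k : ℤ) →
          ((M.hstep)^[t] y) j = ((M.hstep)^[t] x) j) := by
  constructor
  · intro x hx hhead k
    obtain ⟨i, hih⟩ := hhead
    refine ⟨max k i.natAbs + N, fun y hy ha t j hj => ?_⟩
    refine TuringMachine.main2 M N hcyc (max k i.natAbs) x hx ⟨i, ?_, hih⟩ y hy ?_ t j ?_
    · rw [Int.abs_eq_natAbs]
      exact_mod_cast le_max_right k i.natAbs
    · intro i' hi'
      refine ha i' ?_
      have hcast : ((max k i.natAbs + N : ℕ) : ℤ) = ((max k i.natAbs : ℕ) : ℤ) + (N : ℤ) := by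
        push_cast; ring
      rw [hcast]
      exact hi'
    · exact hj.trans (by exact_mod_cast le_max_left k i.natAbs)
  · exact fun k x hx hh y hy ha t j hj =>
      TuringMachine.main2 M N hcyc k x hx hh y hy ha t j hj
end

section
/- Let T be a Turing machine such that the set of times at which cell 0 is visited is uniformly bounded on non-preperiodic configurations (for some p, every non-preperiodic x has |Φ_0(x)| ≤ p, and similarly for every cell by shift-invariance). Then the moving-head system T_H is almost equicontinuous: its equicontinuity points form a dense (indeed residual) subset of X_H. -/
namespace TuringMachine

variable {A Q : Type*}

/-- Encode a machine configuration as a point of the moving-head system. -/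
def encode (c : Config A Q) : ℤ → Cell A Q :=
  fun j => if j = c.2.2 then Sum.inr (c.1 c.2.2, c.2.1) else Sum.inl (c.1 j)

lemma encode_head (c : Config A Q) : encode c c.2.2 = Sum.inr (c.1 c.2.2, c.2.1) := by
  simp [encode]

lemma encode_ne (c : Config A Q) {j : ℤ} (h : j ≠ c.2.2) : encode c j = Sum.inl (c.1 j) := by
  simp [encode, h]

lemma encode_inr {c : Config A Q} {j : ℤ} {p : A × Q} (h : encode c j = Sum.inr p) :
    j = c.2.2 := by
  by_contra hj
  rw [encode_ne c hj] at h
  exact absurd h (by simp)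

lemma xhmem_encode (c : Config A Q) : XHmem (encode c) := by
  intro a ha b hb
  obtain ⟨pa, hpa⟩ := ha
  obtain ⟨pb, hpb⟩ := hb
  rw [encode_inr hpa, encode_inr hpb]

lemma hstep_eq_of_head (M : TuringMachine A Q) (x : ℤ → Cell A Q) (i0 : ℤ) (b0 : A) (q0 : Q)
    (hx : x i0 = Sum.inr (b0, q0)) (huniq : ∀ i b q, x i = Sum.inr (b, q) → i = i0) :
    M.hstep x =
      Function.update (Function.update x i0 (Sum.inl (M.δ b0 q0).1))
        (i0 + dir (M.δ b0 q0).2.2)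
        (match Function.update x i0 (Sum.inl (M.δ b0 q0).1) (i0 + dir (M.δ b0 q0).2.2) with
          | Sum.inl c => Sum.inr (c, (M.δ b0 q0).2.1)
          | Sum.inr (c, _) => Sum.inr (c, (M.δ b0 q0).2.1)) := by
  classical
  have hex : ∃ i : ℤ, ∃ b : A, ∃ q : Q, x i = Sum.inr (b, q) := ⟨i0, b0, q0, hx⟩
  unfold hstep
  rw [dif_pos hex]
  have hI : hex.choose = i0 :=
    huniq _ _ _ hex.choose_spec.choose_spec.choose_spec
  have hspec := hex.choose_spec.choose_spec.choose_spec
  have h2 : x hex.choose = Sum.inr (b0, q0) := by rw [hI]; exact hx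
  have hpair := Sum.inr.inj (hspec.symm.trans h2)
  have hb : hex.choose_spec.choose = b0 := ((Prod.mk.injEq _ _ _ _).mp hpair).1
  have hq : hex.choose_spec.choose_spec.choose = q0 := ((Prod.mk.injEq _ _ _ _).mp hpair).2
  have key : ∀ (I : ℤ) (B : A) (QQ : Q), I = i0 → B = b0 → QQ = q0 →
      (Function.update (Function.update x I (Sum.inl (M.δ B QQ).1))
        (I + dir (M.δ B QQ).2.2)
        (match Function.update x I (Sum.inl (M.δ B QQ).1) (I + dir (M.δ B QQ).2.2) with
          | Sum.inl c => Sum.inr (c, (M.δ B QQ).2.1)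
          | Sum.inr (c, _) => Sum.inr (c, (M.δ B QQ).2.1))) =
      Function.update (Function.update x i0 (Sum.inl (M.δ b0 q0).1))
        (i0 + dir (M.δ b0 q0).2.2)
        (match Function.update x i0 (Sum.inl (M.δ b0 q0).1) (i0 + dir (M.δ b0 q0).2.2) with
          | Sum.inl c => Sum.inr (c, (M.δ b0 q0).2.1)
          | Sum.inr (c, _) => Sum.inr (c, (M.δ b0 q0).2.1)) := by
    rintro _ _ _ rfl rfl rfl; rfl
  exact key _ _ _ hI hb hq

end TuringMachine
namespace TuringMachine

variable {A Q : Type*}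

lemma hstep_encode (M : TuringMachine A Q) (c : Config A Q) :
    M.hstep (encode c) = encode (M.step c) := by
  have huniq : ∀ i b q, encode c i = Sum.inr (b, q) → i = c.2.2 :=
    fun i b q h => encode_inr h
  rw [hstep_eq_of_head M (encode c) c.2.2 (c.1 c.2.2) c.2.1 (encode_head c) huniq]
  set r := M.δ (c.1 c.2.2) c.2.1 with hr
  have hd : dir r.2.2 ≠ 0 := by
    unfold dir; split <;> simp
  have hne : c.2.2 + dir r.2.2 ≠ c.2.2 := by
    intro h; apply hd; omega
  funext l
  have hstepc : M.step c = (Function.update c.1 c.2.2 r.1, r.2.1, c.2.2 + dir r.2.2) := rfl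
  -- value of the inner update at the new head position
  have hyj : Function.update (encode c) c.2.2 (Sum.inl r.1) (c.2.2 + dir r.2.2)
      = Sum.inl (c.1 (c.2.2 + dir r.2.2)) := by
    rw [Function.update_of_ne hne, encode_ne c hne]
  by_cases hl : l = c.2.2 + dir r.2.2
  · subst hl
    rw [Function.update_self, hyj, hstepc]
    simp [encode, Function.update_of_ne hne]
  · rw [Function.update_of_ne hl]
    have h2 : encode (M.step c) l = Sum.inl (Function.update c.1 c.2.2 r.1 l) := by
      rw [hstepc]; exact encode_ne _ hl
    rw [h2]
    by_cases hl2 : l = c.2.2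
    · subst hl2
      rw [Function.update_self, Function.update_self]
    · rw [Function.update_of_ne hl2, Function.update_of_ne hl2, encode_ne c hl2]

lemma hstep_iterate_encode (M : TuringMachine A Q) (c : Config A Q) (t : ℕ) :
    (M.hstep)^[t] (encode c) = encode ((M.step)^[t] c) := by
  induction t with
  | zero => rfl
  | succ t ih =>
      rw [Function.iterate_succ_apply', ih, hstep_encode,
        Function.iterate_succ_apply' M.step t c]

lemma hstep_headless (M : TuringMachine A Q) (x : ℤ → Cell A Q)
    (h : ∀ i, ¬ isHead (x i)) : M.hstep x = x := by
  classical
  have hne : ¬ ∃ i : ℤ, ∃ b : A, ∃ q : Q, x i = Sum.inr (b, q) := by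
    rintro ⟨i, b, q, hi⟩
    exact h i ⟨(b, q), hi⟩
  unfold hstep
  rw [dif_neg hne]

lemma hstep_iterate_headless (M : TuringMachine A Q) (x : ℤ → Cell A Q)
    (h : ∀ i, ¬ isHead (x i)) (t : ℕ) : (M.hstep)^[t] x = x := by
  induction t with
  | zero => rfl
  | succ t ih => rw [Function.iterate_succ_apply', ih, hstep_headless M x h]

/-- Classification: a point of X_H is headless or encodes a configuration. -/
lemma headless_or_encode {x : ℤ → Cell A Q} (hx : XHmem x) :
    (∀ i, ¬ isHead (x i)) ∨ ∃ c : Config A Q, x = encode c := by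
  by_cases h : ∃ i, isHead (x i)
  · right
    obtain ⟨i0, ⟨⟨b, q⟩, hbq⟩⟩ := h
    refine ⟨(fun j => Sum.elim id Prod.fst (x j), q, i0), ?_⟩
    funext l
    by_cases hl : l = i0
    · subst hl
      simp [encode, hbq]
    · show x l = encode _ l
      rw [encode_ne _ hl]
      rcases hxl : x l with a | p
      · simp [hxl]
      · exact absurd (hx (Set.mem_setOf.mpr ⟨p, hxl⟩) (Set.mem_setOf.mpr ⟨(b,q), hbq⟩)) hl
  · left
    push_neg at h
    exact h

end TuringMachine
namespace TuringMachine

variable {A Q : Type*}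

lemma step_congr (M : TuringMachine A Q) (d d' : Config A Q)
    (h2 : d'.2 = d.2) (hr : d'.1 d.2.2 = d.1 d.2.2) :
    (M.step d').2 = (M.step d).2 ∧
    ∀ l, d'.1 l = d.1 l → (M.step d').1 l = (M.step d).1 l := by
  have hp1 : d'.2.1 = d.2.1 := by rw [h2]
  have hp2 : d'.2.2 = d.2.2 := by rw [h2]
  have hrr : M.δ (d'.1 d'.2.2) d'.2.1 = M.δ (d.1 d.2.2) d.2.1 := by
    rw [hp2, hr, hp1]
  constructor
  · show ((M.δ (d'.1 d'.2.2) d'.2.1).2.1, d'.2.2 + dir (M.δ (d'.1 d'.2.2) d'.2.1).2.2)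
      = ((M.δ (d.1 d.2.2) d.2.1).2.1, d.2.2 + dir (M.δ (d.1 d.2.2) d.2.1).2.2)
    rw [hrr, hp2]
  · intro l hl
    show Function.update d'.1 d'.2.2 (M.δ (d'.1 d'.2.2) d'.2.1).1 l
      = Function.update d.1 d.2.2 (M.δ (d.1 d.2.2) d.2.1).1 l
    rw [hrr, hp2]
    by_cases hld : l = d.2.2
    · subst hld; rw [Function.update_self, Function.update_self]
    · rw [Function.update_of_ne hld, Function.update_of_ne hld]; exact hl

/-- Locality: two configurations agreeing on a window evolve identically
while the head stays in the window. -/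
lemma locality (M : TuringMachine A Q) (m : ℕ) (c c' : Config A Q)
    (hq : c'.2 = c.2) (htape : ∀ l : ℤ, |l| ≤ (m : ℤ) → c'.1 l = c.1 l) :
    ∀ T : ℕ, (∀ s, s < T → |M.pos s c| ≤ (m : ℤ)) →
      ((M.step)^[T] c').2 = ((M.step)^[T] c).2 ∧
      ∀ l : ℤ, |l| ≤ (m : ℤ) → ((M.step)^[T] c').1 l = ((M.step)^[T] c).1 l := by
  intro T
  induction T with
  | zero => exact fun _ => ⟨hq, htape⟩
  | succ T ih =>
      intro hpos
      obtain ⟨ih2, ih1⟩ := ih (fun s hs => hpos s (hs.trans (Nat.lt_succ_self T)))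
      have hposT : |((M.step)^[T] c).2.2| ≤ (m : ℤ) := hpos T (Nat.lt_succ_self T)
      have hread : ((M.step)^[T] c').1 (((M.step)^[T] c).2.2)
          = ((M.step)^[T] c).1 (((M.step)^[T] c).2.2) := ih1 _ hposT
      obtain ⟨hs2, hs1⟩ := step_congr M ((M.step)^[T] c) ((M.step)^[T] c') ih2 hread
      rw [Function.iterate_succ_apply', Function.iterate_succ_apply']
      exact ⟨hs2, fun l hlm => hs1 l (ih1 l hlm)⟩

/-- The tape is frozen at a cell which the head does not visit. -/
lemma freeze (M : TuringMachine A Q) (c : Config A Q) (j : ℤ) :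
    ∀ t : ℕ, (∀ s, s < t → M.pos s c ≠ j) → ((M.step)^[t] c).1 j = c.1 j := by
  intro t
  induction t with
  | zero => exact fun _ => rfl
  | succ t ih =>
      intro h
      rw [Function.iterate_succ_apply']
      have hj : ((M.step)^[t] c).2.2 ≠ j := h t (Nat.lt_succ_self t)
      show Function.update ((M.step)^[t] c).1 ((M.step)^[t] c).2.2 _ j = _
      rw [Function.update_of_ne (fun hh => hj hh.symm)]
      exact ih (fun s hs => h s (hs.trans (Nat.lt_succ_self t)))

/-- A preperiodic configuration has bounded head trajectory. -/
lemma preperiodic_bounded (M : TuringMachine A Q) (c : Config A Q)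
    (h : M.Preperiodic c) : ∃ R : ℕ, ∀ t, |M.pos t c| ≤ (R : ℤ) := by
  obtain ⟨n, p, hp, hcyc⟩ := h
  have key : ∀ t, ∃ s ≤ n + p, (M.step)^[t] c = (M.step)^[s] c := by
    intro t
    induction t using Nat.strong_induction_on with
    | _ t ih =>
      by_cases ht : t ≤ n + p
      · exact ⟨t, ht, rfl⟩
      · push_neg at ht
        have h1 : (M.step)^[t] c = (M.step)^[t - p] c := by
          have e1 : t = (t - (n + p)) + (n + p) := by omega
          have e2 : (t - (n + p)) + n = t - p := by omega
          calc (M.step)^[t] c = (M.step)^[t - (n + p)] ((M.step)^[n + p] c) := by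
                rw [← Function.iterate_add_apply, Nat.sub_add_cancel (le_of_lt ht)]
              _ = (M.step)^[t - (n + p)] ((M.step)^[n] c) := by rw [hcyc]
              _ = (M.step)^[t - p] c := by
                rw [← Function.iterate_add_apply, e2]
        obtain ⟨s, hs, hs2⟩ := ih (t - p) (by omega)
        exact ⟨s, hs, h1.trans hs2⟩
  refine ⟨(Finset.range (n + p + 1)).sup (fun s => (M.pos s c).natAbs), fun t => ?_⟩
  obtain ⟨s, hs, hseq⟩ := key t
  have : M.pos t c = M.pos s c := by unfold pos; rw [hseq]
  rw [this]
  have hmem : s ∈ Finset.range (n + p + 1) := Finset.mem_range.mpr (by omega)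
  have := Finset.le_sup (f := fun s => (M.pos s c).natAbs) hmem
  rw [Int.abs_eq_natAbs]
  exact_mod_cast this

end TuringMachine
namespace TuringMachine

variable {A Q : Type*}

lemma encard_biUnion_le {ι α : Type*} (s : Finset ι) (f : ι → Set α) :
    (⋃ i ∈ s, f i).encard ≤ ∑ i ∈ s, (f i).encard := by
  classical
  induction s using Finset.induction_on with
  | empty => simp
  | insert a s hx ih =>
      rw [Finset.sum_insert hx]
      refine le_trans ?_ (add_le_add_right ih _)
      rw [show (⋃ i ∈ insert a s, f i) = f a ∪ ⋃ i ∈ s, f i by simp]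
      exact Set.encard_union_le _ _

lemma visits_window (M : TuringMachine A Q) {p : ℕ}
    (hvis' : ∀ (i : ℤ) (c : Config A Q), ¬ M.Preperiodic c →
      Set.encard {t : ℕ | M.pos t c = i} ≤ (p : ℕ∞))
    (c : Config A Q) (hc : ¬ M.Preperiodic c) (K : ℕ) :
    {t : ℕ | |M.pos t c| ≤ (K : ℤ)}.Finite ∧
    {t : ℕ | |M.pos t c| ≤ (K : ℤ)}.ncard ≤ (Finset.Icc (-(K : ℤ)) (K : ℤ)).card * p := by
  have hsub : {t : ℕ | |M.pos t c| ≤ (K : ℤ)}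
      ⊆ ⋃ i ∈ Finset.Icc (-(K : ℤ)) (K : ℤ), {t : ℕ | M.pos t c = i} := by
    intro t ht
    have := abs_le.mp (Set.mem_setOf.mp ht)
    exact Set.mem_biUnion (Finset.mem_Icc.mpr this) rfl
  have h1 : {t : ℕ | |M.pos t c| ≤ (K : ℤ)}.encard
      ≤ ((Finset.Icc (-(K : ℤ)) (K : ℤ)).card * p : ℕ) := by
    refine le_trans (Set.encard_mono hsub) (le_trans (encard_biUnion_le _ _) ?_)
    calc ∑ i ∈ Finset.Icc (-(K : ℤ)) (K : ℤ), {t : ℕ | M.pos t c = i}.encard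
        ≤ ∑ _i ∈ Finset.Icc (-(K : ℤ)) (K : ℤ), (p : ℕ∞) :=
          Finset.sum_le_sum (fun i _ => hvis' i c hc)
      _ = ((Finset.Icc (-(K : ℤ)) (K : ℤ)).card * p : ℕ) := by
          rw [Finset.sum_const, nsmul_eq_mul]
          push_cast
          ring
  exact Set.encard_le_coe_iff_finite_ncard_le.mp h1

end TuringMachine
namespace TuringMachine

variable {A Q : Type*}

lemma pos_iterate (M : TuringMachine A Q) (c : Config A Q) (s E : ℕ) :
    M.pos s ((M.step)^[E] c) = M.pos (s + E) c := by
  unfold pos; rw [← Function.iterate_add_apply]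

lemma tape_frozen_after (M : TuringMachine A Q) (c : Config A Q) (j : ℤ) (E t : ℕ)
    (hEt : E ≤ t) (h : ∀ s, E ≤ s → s < t → M.pos s c ≠ j) :
    ((M.step)^[t] c).1 j = ((M.step)^[E] c).1 j := by
  have hfr := freeze M ((M.step)^[E] c) j (t - E) (fun s hs => by
    rw [pos_iterate]
    exact h (s + E) (by omega) (by omega))
  rw [← Function.iterate_add_apply, Nat.sub_add_cancel hEt] at hfr
  exact hfr

lemma encode_congr_at {c c' : Config A Q} {j : ℤ} (h2 : c'.2 = c.2)
    (hj : c'.1 j = c.1 j) (hhead : c'.1 c.2.2 = c.1 c.2.2) :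
    encode c' j = encode c j := by
  have hp : c'.2.2 = c.2.2 := by rw [h2]
  have hq : c'.2.1 = c.2.1 := by rw [h2]
  simp only [encode]
  rw [hp, hq, hhead]
  by_cases hjp : j = c.2.2
  · rw [if_pos hjp, if_pos hjp]
  · rw [if_neg hjp, if_neg hjp, hj]

lemma pin {c : Config A Q} {m : ℕ} (hm : |c.2.2| ≤ (m : ℤ)) {z : ℤ → Cell A Q}
    (hz : XHmem z) (hag : ∀ i : ℤ, |i| ≤ (m : ℤ) → z i = encode c i) :
    ∃ c' : Config A Q, z = encode c' ∧ c'.2 = c.2 ∧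
      ∀ l : ℤ, |l| ≤ (m : ℤ) → c'.1 l = c.1 l := by
  have hzc : z c.2.2 = Sum.inr (c.1 c.2.2, c.2.1) := by rw [hag _ hm, encode_head]
  rcases headless_or_encode hz with hh | ⟨c', rfl⟩
  · exact absurd ⟨_, hzc⟩ (hh c.2.2)
  · have hpos : c.2.2 = c'.2.2 := encode_inr hzc
    have h1 : encode c' c'.2.2 = Sum.inr (c.1 c.2.2, c.2.1) := by rw [← hpos]; exact hzc
    rw [encode_head] at h1
    have hpair := Sum.inr.inj h1
    have hb : c'.1 c'.2.2 = c.1 c.2.2 := congrArg Prod.fst hpair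
    have hq : c'.2.1 = c.2.1 := congrArg Prod.snd hpair
    refine ⟨c', rfl, Prod.ext hq hpos.symm, ?_⟩
    intro l hl
    by_cases hlp : l = c'.2.2
    · subst hlp; rw [hb, hpos]
    · have hthis := hag l hl
      rw [encode_ne c' hlp] at hthis
      have hlc : l ≠ c.2.2 := fun h => hlp (h.trans hpos)
      rw [encode_ne c hlc] at hthis
      exact Sum.inl.inj hthis

end TuringMachine
namespace TuringMachine

variable {A Q : Type*}

/-- Core blocking lemma: every cylinder contains a smaller cylinder which blocks
the window `[-k', k']`. -/
lemma core (M : TuringMachine A Q) {p : ℕ}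
    (hvis' : ∀ (i : ℤ) (c : Config A Q), ¬ M.Preperiodic c →
      Set.encard {t : ℕ | M.pos t c = i} ≤ (p : ℕ∞))
    (w : ℤ → Cell A Q) (hw : XHmem w) (m0 k' : ℕ) :
    ∃ (y : ℤ → Cell A Q) (m : ℕ), XHmem y ∧ m0 + 1 ≤ m ∧
      (∀ i : ℤ, |i| ≤ (m0 : ℤ) → y i = w i) ∧
      ∀ z : ℤ → Cell A Q, XHmem z → (∀ i : ℤ, |i| ≤ (m : ℤ) → z i = y i) →
        ∀ t : ℕ, ∀ j : ℤ, |j| ≤ (k' : ℤ) →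
          ((M.hstep)^[t] z) j = ((M.hstep)^[t] y) j := by
  classical
  by_cases hA : ∃ c : Config A Q,
      (∀ i : ℤ, |i| ≤ (m0 : ℤ) → encode c i = w i) ∧ ∃ R : ℕ, ∀ t, |M.pos t c| ≤ (R : ℤ)
  · -- Case A : a bounded-trajectory extension exists
    obtain ⟨c, hcw, R, hR⟩ := hA
    set m : ℕ := m0 + R + k' + 1 with hmdef
    refine ⟨encode c, m, xhmem_encode c, by omega, hcw, ?_⟩
    intro z hz hag t j hj
    have hRm : (R : ℤ) ≤ (m : ℤ) := by push_cast; omega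
    have hkm : (k' : ℤ) ≤ (m : ℤ) := by push_cast; omega
    have hm0 : |c.2.2| ≤ (m : ℤ) := le_trans (hR 0) hRm
    obtain ⟨c', rfl, h2, htape⟩ := pin hm0 hz hag
    obtain ⟨hl2, hl1⟩ := locality M m c c' h2 htape t
      (fun s _ => le_trans (hR s) hRm)
    rw [hstep_iterate_encode, hstep_iterate_encode]
    exact encode_congr_at hl2 (hl1 j (le_trans hj hkm))
      (hl1 _ (le_trans (hR t) hRm))
  · by_cases hB : ∃ c : Config A Q, ∀ i : ℤ, |i| ≤ (m0 : ℤ) → encode c i = w i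
    · -- Case B2 : extensions exist, all with unbounded trajectory
      obtain ⟨c0, hc0⟩ := hB
      have hnp : ∀ c : Config A Q, (∀ i : ℤ, |i| ≤ (m0 : ℤ) → encode c i = w i) →
          ¬ M.Preperiodic c := fun c hc hpp =>
        hA ⟨c, hc, preperiodic_bounded M c hpp⟩
      set K : ℕ := max m0 k' + 1 with hKdef
      set NB : ℕ := (Finset.Icc (-(K : ℤ)) (K : ℤ)).card * p with hNBdef
      set V : Config A Q → ℕ := fun c => {t : ℕ | |M.pos t c| ≤ (K : ℤ)}.ncard with hVdef
      set Vals : Set ℕ :=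
        {n : ℕ | ∃ c : Config A Q, (∀ i : ℤ, |i| ≤ (m0 : ℤ) → encode c i = w i) ∧ V c = n}
        with hValsdef
      have hVne : Vals.Nonempty := ⟨V c0, c0, hc0, rfl⟩
      have hVbdd : BddAbove Vals := by
        refine ⟨NB, ?_⟩
        rintro n ⟨c, hc, rfl⟩
        exact (visits_window M hvis' c (hnp c hc) K).2
      obtain ⟨cs, hcsw, hcsV⟩ := Nat.sSup_mem hVne hVbdd
      have hSfin : {t : ℕ | |M.pos t cs| ≤ (K : ℤ)}.Finite :=
        (visits_window M hvis' cs (hnp cs hcsw) K).1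
      obtain ⟨T, hT⟩ := hSfin.bddAbove
      have hT' : ∀ s : ℕ, |M.pos s cs| ≤ (K : ℤ) → s ≤ T := fun s hs => hT hs
      set B : ℕ := (Finset.range (T + 1)).sup (fun t => (M.pos t cs).natAbs) with hBdef
      set m : ℕ := max (max m0 K) B + 1 with hmdef
      have hmles : ∀ s, s ≤ T → |M.pos s cs| ≤ (m : ℤ) - 1 := by
        intro s hs
        have h1 : (M.pos s cs).natAbs ≤ B :=
          Finset.le_sup (f := fun t => (M.pos t cs).natAbs)
            (Finset.mem_range.mpr (by omega))
        rw [Int.abs_eq_natAbs]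
        have : (B : ℤ) ≤ (m : ℤ) - 1 := by push_cast; omega
        exact le_trans (by exact_mod_cast h1) this
      have hKm : (K : ℤ) ≤ (m : ℤ) := by push_cast; omega
      have hkK : (k' : ℤ) < (K : ℤ) := by push_cast; omega
      -- the trajectory of cs is unbounded, find first exit time E from the window m
      have hub : ∃ t : ℕ, (m : ℤ) < |M.pos t cs| := by
        by_contra h
        push_neg at h
        exact hA ⟨cs, hcsw, m, h⟩
      set E : ℕ := Nat.find hub with hEdef
      have hE : (m : ℤ) < |M.pos E cs| := Nat.find_spec hub
      have hEmin : ∀ s, s < E → |M.pos s cs| ≤ (m : ℤ) := by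
        intro s hs
        have := Nat.find_min hub hs
        omega
      have hTE : T < E := by
        by_contra h
        push_neg at h
        have := hmles E h
        omega
      have hafter_cs : ∀ t, E ≤ t → (K : ℤ) < |M.pos t cs| := by
        intro t ht
        by_contra h
        push_neg at h
        have := hT' t h
        omega
      refine ⟨encode cs, m, xhmem_encode cs, by omega, hcsw, ?_⟩
      intro z hz hag t j hj
      have hpos0 : |cs.2.2| ≤ (m : ℤ) := by
        have : M.pos 0 cs = cs.2.2 := rfl
        have h0 := hmles 0 (Nat.zero_le T)
        rw [this] at h0
        omega
      obtain ⟨c', rfl, h2, htape⟩ := pin hpos0 hz hag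
      have hc'ext : ∀ i : ℤ, |i| ≤ (m0 : ℤ) → encode c' i = w i := by
        intro i hi
        have him : |i| ≤ (m : ℤ) := le_trans hi (by push_cast; omega)
        rw [hag i him]
        exact hcsw i hi
      have hloc : ∀ s, s ≤ E →
          ((M.step)^[s] c').2 = ((M.step)^[s] cs).2 ∧
          ∀ l : ℤ, |l| ≤ (m : ℤ) → ((M.step)^[s] c').1 l = ((M.step)^[s] cs).1 l :=
        fun s hs => locality M m cs c' h2 htape s (fun u hu => hEmin u (by omega))
      have hposeq : ∀ s, s ≤ E → M.pos s c' = M.pos s cs := by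
        intro s hs
        have := (hloc s hs).1
        unfold pos
        rw [this]
      -- after time E the head of z never comes back near the window, by maximality
      have hafter_c' : ∀ t, E ≤ t → (K : ℤ) < |M.pos t c'| := by
        intro t ht
        by_contra h
        push_neg at h
        have hS'fin : {u : ℕ | |M.pos u c'| ≤ (K : ℤ)}.Finite :=
          (visits_window M hvis' c' (hnp c' hc'ext) K).1
        have hsub : insert t {u : ℕ | |M.pos u cs| ≤ (K : ℤ)}
            ⊆ {u : ℕ | |M.pos u c'| ≤ (K : ℤ)} := by
          rintro u (rfl | hu)
          · exact h
          · have huT : u ≤ T := hT' u hu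
            have : M.pos u c' = M.pos u cs := hposeq u (by omega)
            rw [Set.mem_setOf, this]
            exact hu
        have htnot : t ∉ {u : ℕ | |M.pos u cs| ≤ (K : ℤ)} := by
          intro hmem
          have := hafter_cs t ht
          rw [Set.mem_setOf] at hmem
          omega
        have hcard : V cs + 1 ≤ V c' := by
          have h1 : (insert t {u : ℕ | |M.pos u cs| ≤ (K : ℤ)}).ncard
              = V cs + 1 := Set.ncard_insert_of_notMem htnot hSfin
          have h2' : (insert t {u : ℕ | |M.pos u cs| ≤ (K : ℤ)}).ncard
              ≤ V c' := Set.ncard_le_ncard hsub hS'fin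
          omega
        have hle : V c' ≤ sSup Vals := le_csSup hVbdd ⟨c', hc'ext, rfl⟩
        omega
      -- now compare the traces
      rw [hstep_iterate_encode, hstep_iterate_encode]
      rcases le_or_gt t E with htE | htE
      · obtain ⟨hl2, hl1⟩ := hloc t htE
        by_cases hcase : |M.pos t cs| ≤ (m : ℤ)
        · exact encode_congr_at hl2 (hl1 j (le_trans hj (by omega))) (hl1 _ hcase)
        · push_neg at hcase
          have hjne : j ≠ ((M.step)^[t] cs).2.2 := by
            intro hje
            have : M.pos t cs = j := by unfold pos; rw [hje]
            rw [this] at hcase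
            omega
          have hjne' : j ≠ ((M.step)^[t] c').2.2 := by rw [hl2]; exact hjne
          rw [encode_ne _ hjne', encode_ne _ hjne]
          rw [hl1 j (le_trans hj (by omega))]
      · have hjK : |j| < (K : ℤ) := lt_of_le_of_lt hj hkK
        have hnecs : ∀ s, E ≤ s → M.pos s cs ≠ j := by
          intro s hs he
          have := hafter_cs s hs
          rw [he] at this
          omega
        have hnec' : ∀ s, E ≤ s → M.pos s c' ≠ j := by
          intro s hs he
          have := hafter_c' s hs
          rw [he] at this
          omega
        have hjne : j ≠ ((M.step)^[t] cs).2.2 := fun hje =>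
          hnecs t (by omega) (by unfold pos; rw [hje])
        have hjne' : j ≠ ((M.step)^[t] c').2.2 := fun hje =>
          hnec' t (by omega) (by unfold pos; rw [hje])
        rw [encode_ne _ hjne', encode_ne _ hjne]
        have hf1 : ((M.step)^[t] cs).1 j = ((M.step)^[E] cs).1 j :=
          tape_frozen_after M cs j E t (by omega) (fun s hs _ => hnecs s hs)
        have hf2 : ((M.step)^[t] c').1 j = ((M.step)^[E] c').1 j :=
          tape_frozen_after M c' j E t (by omega) (fun s hs _ => hnec' s hs)
        rw [hf1, hf2]
        rw [(hloc E le_rfl).2 j (le_trans hj (by omega))]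
    · -- Case B1 : no extension with a head at all
      refine ⟨w, max m0 k' + 1, hw, by omega, fun i _ => rfl, ?_⟩
      intro z hz hag t j hj
      have hwhl : ∀ i, ¬ isHead (w i) := by
        rcases headless_or_encode hw with h | ⟨c, rfl⟩
        · exact h
        · exact absurd ⟨c, fun i _ => rfl⟩ hB
      have hzhl : ∀ i, ¬ isHead (z i) := by
        rcases headless_or_encode hz with h | ⟨c, rfl⟩
        · exact h
        · refine absurd ⟨c, fun i hi => ?_⟩ hB
          have him : |i| ≤ ((max m0 k' + 1 : ℕ) : ℤ) := le_trans hi (by push_cast; omega)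
          rw [hag i him]
      rw [hstep_iterate_headless M w hwhl, hstep_iterate_headless M z hzhl]
      exact hag j (le_trans hj (by push_cast; omega))

end TuringMachine
open TuringMachine in
/-- If the number of visits of the head to each fixed cell is uniformly bounded
over all non-preperiodic configurations, then the moving-head system T_H is
almost equicontinuous: its equicontinuity points are dense (every cylinder of
X_H contains an equicontinuity point). -/
theorem almost_equicontinuous_of_uniformly_bounded_visits
    {A Q : Type*} [Fintype A] [Fintype Q]
    (M : TuringMachine A Q)
    (hvis : ∃ p : ℕ, ∀ (i : ℤ) (x : TuringMachine.Config A Q),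
      ¬ M.Preperiodic x →
      Set.encard {t : ℕ | M.pos t x = i} ≤ (p : ℕ∞)) :
    ∀ x : ℤ → TuringMachine.Cell A Q, TuringMachine.XHmem x → ∀ k : ℕ,
      ∃ y : ℤ → TuringMachine.Cell A Q, TuringMachine.XHmem y ∧
        (∀ i : ℤ, |i| ≤ (k : ℤ) → y i = x i) ∧
        ∀ k' : ℕ, ∃ m : ℕ, ∀ z : ℤ → TuringMachine.Cell A Q,
          TuringMachine.XHmem z → (∀ i : ℤ, |i| ≤ (m : ℤ) → z i = y i) →
          ∀ t : ℕ, ∀ j : ℤ, |j| ≤ (k' : ℤ) →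
            ((M.hstep)^[t] z) j = ((M.hstep)^[t] y) j := by
  classical
  obtain ⟨p, hvis'⟩ := hvis
  intro x hx k
  -- one refinement step, packaged on the subtype of pairs (point of X_H, window)
  have stepex : ∀ (n : ℕ) (d : {q : (ℤ → Cell A Q) × ℕ // XHmem q.1}),
      ∃ d' : {q : (ℤ → Cell A Q) × ℕ // XHmem q.1},
        d.1.2 + 1 ≤ d'.1.2 ∧
        (∀ i : ℤ, |i| ≤ (d.1.2 : ℤ) → d'.1.1 i = d.1.1 i) ∧
        ∀ z : ℤ → Cell A Q, XHmem z →
          (∀ i : ℤ, |i| ≤ (d'.1.2 : ℤ) → z i = d'.1.1 i) →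
          ∀ t : ℕ, ∀ j : ℤ, |j| ≤ (n : ℤ) →
            ((M.hstep)^[t] z) j = ((M.hstep)^[t] d'.1.1) j := by
    intro n d
    obtain ⟨y, m, h1, h2, h3, h4⟩ := core M hvis' d.1.1 d.2 d.1.2 n
    exact ⟨⟨(y, m), h1⟩, h2, h3, h4⟩
  choose F hF1 hF2 hF3 using stepex
  obtain ⟨seq, hseq0, hseq⟩ : ∃ seq : ℕ → {q : (ℤ → Cell A Q) × ℕ // XHmem q.1},
      seq 0 = ⟨(x, k), hx⟩ ∧ ∀ n, seq (n + 1) = F n (seq n) :=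
    ⟨fun n => Nat.rec ⟨(x, k), hx⟩ (fun n d => F n d) n, rfl, fun n => rfl⟩
  -- notation
  have hM1 : ∀ n, (seq n).1.2 + 1 ≤ (seq (n + 1)).1.2 := by
    intro n; rw [hseq n]; exact hF1 n (seq n)
  have hagree : ∀ n, ∀ i : ℤ, |i| ≤ ((seq n).1.2 : ℤ) →
      (seq (n + 1)).1.1 i = (seq n).1.1 i := by
    intro n; rw [hseq n]; exact hF2 n (seq n)
  have hblock : ∀ n, ∀ z : ℤ → Cell A Q, XHmem z →
      (∀ i : ℤ, |i| ≤ ((seq (n + 1)).1.2 : ℤ) → z i = (seq (n + 1)).1.1 i) →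
      ∀ t : ℕ, ∀ j : ℤ, |j| ≤ (n : ℤ) →
        ((M.hstep)^[t] z) j = ((M.hstep)^[t] (seq (n + 1)).1.1) j := by
    intro n; rw [hseq n]; exact hF3 n (seq n)
  have hMmono : ∀ a b : ℕ, a ≤ b → (seq a).1.2 ≤ (seq b).1.2 := by
    intro a b hab
    induction b, hab using Nat.le_induction with
    | base => exact le_refl _
    | succ b hab ih => exact le_trans ih (by have := hM1 b; omega)
  have hMge : ∀ n, n ≤ (seq n).1.2 := by
    intro n
    induction n with
    | zero => omega
    | succ n ih => have := hM1 n; omega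
  have hchain : ∀ n n' : ℕ, n ≤ n' → ∀ i : ℤ, |i| ≤ ((seq n).1.2 : ℤ) →
      (seq n').1.1 i = (seq n).1.1 i := by
    intro n n' hnn'
    induction n', hnn' using Nat.le_induction with
    | base => exact fun i _ => rfl
    | succ b hab ih =>
        intro i hi
        rw [hagree b i (le_trans hi (by exact_mod_cast hMmono n b hab)), ih i hi]
  -- the limit point
  set y : ℤ → Cell A Q := fun i => (seq i.natAbs).1.1 i with hydef
  have hy_eq : ∀ n, ∀ i : ℤ, |i| ≤ ((seq n).1.2 : ℤ) → y i = (seq n).1.1 i := by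
    intro n i hi
    have hNi : |i| ≤ ((seq i.natAbs).1.2 : ℤ) := by
      rw [Int.abs_eq_natAbs]
      exact_mod_cast hMge i.natAbs
    have h1 : (seq (max n i.natAbs)).1.1 i = (seq i.natAbs).1.1 i :=
      hchain _ _ (le_max_right _ _) i hNi
    have h2 : (seq (max n i.natAbs)).1.1 i = (seq n).1.1 i :=
      hchain _ _ (le_max_left _ _) i hi
    rw [hydef]
    simp only
    rw [← h1, h2]
  have hyX : XHmem y := by
    intro a ha b hb
    set N := max a.natAbs b.natAbs with hN
    have hya : y a = (seq N).1.1 a := by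
      apply hy_eq
      rw [Int.abs_eq_natAbs]
      have : a.natAbs ≤ (seq N).1.2 := le_trans (le_max_left _ _) (hMge N)
      exact_mod_cast this
    have hyb : y b = (seq N).1.1 b := by
      apply hy_eq
      rw [Int.abs_eq_natAbs]
      have : b.natAbs ≤ (seq N).1.2 := le_trans (le_max_right _ _) (hMge N)
      exact_mod_cast this
    have ha' : isHead ((seq N).1.1 a) := by rw [← hya]; exact ha
    have hb' : isHead ((seq N).1.1 b) := by rw [← hyb]; exact hb
    exact (seq N).2 ha' hb'
  refine ⟨y, hyX, ?_, ?_⟩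
  · intro i hi
    have h0 : y i = (seq 0).1.1 i := by
      apply hy_eq
      rw [hseq0]
      exact hi
    rw [h0, hseq0]
  · intro k'
    refine ⟨(seq (k' + 1)).1.2, ?_⟩
    intro z hz hag t j hj
    have hagY : ∀ i : ℤ, |i| ≤ ((seq (k' + 1)).1.2 : ℤ) → z i = (seq (k' + 1)).1.1 i :=
      fun i hi => (hag i hi).trans (hy_eq (k' + 1) i hi)
    have h1 := hblock k' z hz hagY t j hj
    have h2 := hblock k' y hyX (fun i hi => hy_eq (k' + 1) i hi) t j hj
    rw [h1, h2]
end
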